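/- arXiv:1403.0212 — 5 statements merged into one kernel-verified Lean document; each statement's English description precedes it below -/
import Mathlib

section
/- Let g ∈ ℂ[z,u] be a polynomial in the square of the maximal ideal (z,u), written g = Σ_{i,j} a_{i,j} z^i u^j, and suppose σ(g) = -g, where σ is the ℂ-algebra automorphism of ℂ[z,u] determined by σ(z) = -z and σ(u) = √-1·u, and suppose a_{0,2} = 0. Then the ℂ-vector space ℂ[z,u]/(g, ∂g/∂z, ∂g/∂u) has dimension at least 6; in fact the images of 1, z, u, zu, u², u³ in this quotient are linearly independent over ℂ. -/
open MvPolynomial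

open MvPolynomial

namespace Stmt5Aux

noncomputable section

abbrev R2 : Type := MvPolynomial (Fin 2) ℂ

/-- generator exponents of the monomial ideal `(z², zu², u⁴)`. -/
def S : Set (Fin 2 →₀ ℕ) :=
  {Finsupp.single 0 2, Finsupp.single 0 1 + Finsupp.single 1 2, Finsupp.single 1 4}

def J : Ideal R2 := Ideal.span ((fun s => monomial s (1 : ℂ)) '' S)

lemma mono_mem {s : Fin 2 →₀ ℕ} (c : ℂ) (h : ∃ t ∈ S, t ≤ s) : monomial s c ∈ J := by
  obtain ⟨t, ht, hle⟩ := h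
  have : monomial s c = monomial (s - t) c * monomial t 1 := by
    rw [monomial_mul, mul_one, tsub_add_cancel_of_le hle]
  rw [this]
  exact Ideal.mul_mem_left _ _ (Ideal.subset_span ⟨t, ht, rfl⟩)

lemma choose_gen {w : Fin 2 →₀ ℕ}
    (h : 2 ≤ w 0 ∨ (1 ≤ w 0 ∧ 2 ≤ w 1) ∨ 4 ≤ w 1) : ∃ t ∈ S, t ≤ w := by
  rcases h with h | h | h
  · exact ⟨Finsupp.single 0 2, Or.inl rfl, by
      rw [Finsupp.le_def]; intro i; fin_cases i <;>
        simp [Finsupp.single_apply] <;> omega⟩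
  · exact ⟨Finsupp.single 0 1 + Finsupp.single 1 2, Or.inr (Or.inl rfl), by
      rw [Finsupp.le_def]; intro i; fin_cases i <;>
        simp [Finsupp.single_apply] <;> omega⟩
  · exact ⟨Finsupp.single 1 4, Or.inr (Or.inr rfl), by
      rw [Finsupp.le_def]; intro i; fin_cases i <;>
        simp [Finsupp.single_apply] <;> omega⟩

lemma parity {i j : ℕ} (h : (-1 : ℂ) ^ i * Complex.I ^ j = -1) :
    (i % 2 = 1 ∧ j % 4 = 0) ∨ (i % 2 = 0 ∧ j % 4 = 2) := by
  have hj4 : Complex.I ^ j = Complex.I ^ (j % 4) := by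
    conv_lhs => rw [← Nat.div_add_mod j 4]
    rw [pow_add, pow_mul, Complex.I_pow_four, one_pow, one_mul]
  rw [neg_one_pow_eq_pow_mod_two, hj4] at h
  have hi : i % 2 < 2 := Nat.mod_lt _ (by norm_num)
  have hj : j % 4 < 4 := Nat.mod_lt _ (by norm_num)
  interval_cases h2 : i % 2 <;> interval_cases h4 : j % 4 <;>
    first
      | omega
      | norm_num [pow_succ, Complex.ext_iff] at h

lemma coeff_aeval (p : R2) (w : Fin 2 →₀ ℕ) :
    coeff w (aeval ![-X 0, C Complex.I * X 1] p) =
      (-1 : ℂ) ^ (w 0) * Complex.I ^ (w 1) * coeff w p := by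
  induction p using MvPolynomial.induction_on' with
  | add p q hp hq => simp only [map_add, coeff_add, hp, hq]; ring
  | monomial n a =>
    have key : (aeval ![-X 0, C Complex.I * X 1] (monomial n a) : R2) =
        monomial n ((-1 : ℂ) ^ (n 0) * Complex.I ^ (n 1) * a) := by
      rw [aeval_monomial, monomial_eq,
        Finsupp.prod_fintype _ _ (fun i => pow_zero _),
        Finsupp.prod_fintype _ _ (fun i => pow_zero _),
        Fin.prod_univ_two, Fin.prod_univ_two]
      simp only [Matrix.cons_val_zero, Matrix.cons_val_one, Matrix.head_cons]
      rw [neg_pow, mul_pow]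
      rw [show ((-1 : R2)) = C (-1) by simp, ← C_pow, ← C_pow, algebraMap_eq,
        C_mul, C_mul]
      ring
    rw [key, coeff_monomial, coeff_monomial]
    split_ifs with h
    · subst h; ring
    · ring



noncomputable def e : Fin 6 → (Fin 2 →₀ ℕ) :=
  ![0, Finsupp.single 0 1, Finsupp.single 1 1, Finsupp.single 0 1 + Finsupp.single 1 1,
    Finsupp.single 1 2, Finsupp.single 1 3]

@[simp] lemma e_0 : e 0 = 0 := rfl
@[simp] lemma e_1 : e 1 = Finsupp.single 0 1 := rfl
@[simp] lemma e_2 : e 2 = Finsupp.single 1 1 := rfl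
@[simp] lemma e_3 : e 3 = Finsupp.single 0 1 + Finsupp.single 1 1 := rfl
@[simp] lemma e_4 : e 4 = Finsupp.single 1 2 := rfl
@[simp] lemma e_5 : e 5 = Finsupp.single 1 3 := rfl

lemma e_inj : Function.Injective e := by
  intro a b hab
  fin_cases a <;> fin_cases b <;>
    simp_all [Finsupp.ext_iff, Fin.forall_fin_two, Finsupp.single_apply]

lemma indepJ : LinearIndependent ℂ
    (fun k : Fin 6 => Ideal.Quotient.mk J (monomial (e k) (1 : ℂ))) := by
  rw [Fintype.linearIndependent_iff]
  intro c hc j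
  have hmem : (∑ k : Fin 6, monomial (e k) (c k) : R2) ∈ J := by
    rw [← Ideal.Quotient.eq_zero_iff_mem, map_sum]
    rw [← hc]
    congr 1; funext k
    rw [show (monomial (e k) (c k) : R2) = c k • monomial (e k) 1 by
      rw [smul_monomial, smul_eq_mul, mul_one]]
    rw [← Ideal.Quotient.mkₐ_eq_mk ℂ J, map_smul]
  have hcj : coeff (e j) (∑ k : Fin 6, monomial (e k) (c k) : R2) = c j := by
    rw [coeff_sum]
    simp only [coeff_monomial, e_inj.eq_iff]
    simp [Finset.sum_ite_eq' Finset.univ j c]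
  by_contra hne
  have hsupp : e j ∈ (∑ k : Fin 6, monomial (e k) (c k) : R2).support := by
    rw [mem_support_iff, hcj]; exact hne
  obtain ⟨t, ht, hle⟩ := mem_ideal_span_monomial_image.mp hmem _ hsupp
  rw [Finsupp.le_def] at hle
  have h0 := hle 0
  have h1 := hle 1
  simp only [S, Set.mem_insert_iff, Set.mem_singleton_iff] at ht
  fin_cases j <;> rcases ht with rfl | rfl | rfl <;>
    simp_all [Finsupp.single_apply]


lemma hXX (i j : Fin 2) : (X i * X j : R2) = monomial (Finsupp.single i 1 + Finsupp.single j 1) 1 := by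
  rw [← pow_one (X i : R2), ← pow_one (X j : R2), X_pow_eq_monomial, X_pow_eq_monomial,
    monomial_mul, one_mul]

end

end Stmt5Aux

open Stmt5Aux

/-- Let `g ∈ ℂ[z,u]` belong to the square of the maximal ideal `(z,u)`, satisfy
`σ(g) = -g` for the ℂ-algebra automorphism `σ` with `σ(z) = -z`, `σ(u) = √-1·u`, and have
vanishing `u²`-coefficient. Then the images of `1, z, u, zu, u², u³` in
`ℂ[z,u]/(g, ∂g/∂z, ∂g/∂u)` are linearly independent over ℂ; in particular this quotient
has ℂ-dimension at least 6. Here `z = X 0`, `u = X 1`. -/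
theorem stmt_5 (g : MvPolynomial (Fin 2) ℂ)
    (hmem : g ∈ (Ideal.span {(X 0 : MvPolynomial (Fin 2) ℂ), X 1}) ^ 2)
    (σ : MvPolynomial (Fin 2) ℂ ≃ₐ[ℂ] MvPolynomial (Fin 2) ℂ)
    (hz : σ (X 0) = -X 0) (hu : σ (X 1) = C Complex.I * X 1)
    (hg : σ g = -g)
    (h02 : coeff (Finsupp.single 1 2) g = 0) :
    LinearIndependent ℂ
      (fun k : Fin 6 =>
        Ideal.Quotient.mk (Ideal.span {g, pderiv 0 g, pderiv 1 g})
          ((![1, X 0, X 1, X 0 * X 1, X 1 ^ 2, X 1 ^ 3] : Fin 6 → MvPolynomial (Fin 2) ℂ) k)) ∧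
    (6 : Cardinal) ≤
      Module.rank ℂ (MvPolynomial (Fin 2) ℂ ⧸ Ideal.span {g, pderiv 0 g, pderiv 1 g}) := by
  have hσa : ∀ p : R2, σ p = aeval ![-X 0, C Complex.I * X 1] p := by
    intro p
    have h : (σ : R2 →ₐ[ℂ] R2) = (aeval ![-X 0, C Complex.I * X 1] : R2 →ₐ[ℂ] R2) := by
      apply MvPolynomial.algHom_ext
      intro i; fin_cases i
      · simpa using hz
      · simpa using hu
    have := DFunLike.congr_fun h p
    simpa using this
  have hcond : ∀ w : Fin 2 →₀ ℕ, coeff w g ≠ 0 →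
      (-1 : ℂ) ^ (w 0) * Complex.I ^ (w 1) = -1 := by
    intro w hw
    have h1 : coeff w (σ g) = - coeff w g := by rw [hg, coeff_neg]
    rw [hσa, coeff_aeval] at h1
    exact mul_right_cancel₀ hw (by rw [h1]; ring)
  -- degree ≥ 2 on the support
  have hsub : (Ideal.span {(X 0 : R2), X 1}) ^ 2 ≤
      Ideal.span ((fun s => monomial s (1 : ℂ)) '' {w : Fin 2 →₀ ℕ | 2 ≤ w 0 + w 1}) := by
    rw [pow_two, Ideal.span_mul_span']
    refine Ideal.span_le.mpr ?_
    rintro p hp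
    obtain ⟨x, hx, y, hy, rfl⟩ := Set.mem_mul.mp hp
    simp only [Set.mem_insert_iff, Set.mem_singleton_iff] at hx hy
    apply Ideal.subset_span
    rcases hx with rfl | rfl <;> rcases hy with rfl | rfl <;>
      exact ⟨_, by simp [Finsupp.single_apply], (hXX _ _).symm⟩
  have hdeg : ∀ w ∈ g.support, 2 ≤ w 0 + w 1 := by
    intro w hw
    obtain ⟨t, ht, hle⟩ := mem_ideal_span_monomial_image.mp (hsub hmem) w hw
    rw [Finsupp.le_def] at hle
    have h0 := hle 0
    have h1 := hle 1
    simp only [Set.mem_setOf_eq] at ht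
    omega
  have hsupport : ∀ w ∈ g.support, 2 ≤ w 0 + w 1 ∧ ¬(w 0 = 0 ∧ w 1 = 2) ∧
      ((w 0 % 2 = 1 ∧ w 1 % 4 = 0) ∨ (w 0 % 2 = 0 ∧ w 1 % 4 = 2)) := by
    intro w hw
    refine ⟨hdeg w hw, ?_, parity (hcond w (mem_support_iff.mp hw))⟩
    rintro ⟨ha, hb⟩
    apply mem_support_iff.mp hw
    have hwe : w = Finsupp.single 1 2 := by
      ext i; fin_cases i <;> simp_all [Finsupp.single_apply]
    rw [hwe]; exact h02
  -- memberships in J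
  have hgJ : g ∈ J := by
    refine mem_ideal_span_monomial_image.mpr fun w hw => choose_gen ?_
    obtain ⟨hA, hB, hC⟩ := hsupport w hw
    omega
  have hdJ : ∀ k : Fin 2, pderiv k g ∈ J := by
    intro k
    rw [show g = ∑ v ∈ g.support, monomial v (coeff v g) from (support_sum_monomial_coeff g).symm]
    rw [map_sum]
    refine Ideal.sum_mem _ fun m hm => ?_
    rw [pderiv_monomial]
    by_cases h0 : m k = 0
    · simp only [h0, Nat.cast_zero, mul_zero, map_zero]
      exact J.zero_mem
    · refine mono_mem _ (choose_gen ?_)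
      obtain ⟨hA, hB, hC⟩ := hsupport m hm
      have e0 : ((m - Finsupp.single k 1 : Fin 2 →₀ ℕ)) 0 = m 0 - (if k = 0 then 1 else 0) := by
        rw [Finsupp.tsub_apply, Finsupp.single_apply]
      have e1 : ((m - Finsupp.single k 1 : Fin 2 →₀ ℕ)) 1 = m 1 - (if k = 1 then 1 else 0) := by
        rw [Finsupp.tsub_apply, Finsupp.single_apply]
      rw [e0, e1]
      fin_cases k <;> simp at h0 ⊢ <;> omega
  have hIJ : Ideal.span {g, pderiv 0 g, pderiv 1 g} ≤ J := by
    refine Ideal.span_le.mpr ?_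
    rintro p hp
    simp only [Set.mem_insert_iff, Set.mem_singleton_iff] at hp
    rcases hp with rfl | rfl | rfl
    · exact hgJ
    · exact hdJ 0
    · exact hdJ 1
  -- the factor algebra map
  have hf0 : ∀ a ∈ Ideal.span {g, pderiv 0 g, pderiv 1 g},
      (Ideal.Quotient.mkₐ ℂ J) a = 0 := by
    intro a ha
    rw [Ideal.Quotient.mkₐ_eq_mk, Ideal.Quotient.eq_zero_iff_mem]
    exact hIJ ha
  set f : (R2 ⧸ Ideal.span {g, pderiv 0 g, pderiv 1 g}) →ₐ[ℂ] (R2 ⧸ J) :=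
    Ideal.Quotient.liftₐ _ (Ideal.Quotient.mkₐ ℂ J) hf0 with hfdef
  have hfmk : ∀ p : R2, f (Ideal.Quotient.mk (Ideal.span {g, pderiv 0 g, pderiv 1 g}) p) =
      Ideal.Quotient.mk J p := by
    intro p
    rw [hfdef, Ideal.Quotient.liftₐ_apply]
    rfl
  have hmon : ∀ k : Fin 6,
      (![1, X 0, X 1, X 0 * X 1, X 1 ^ 2, X 1 ^ 3] : Fin 6 → R2) k = monomial (e k) 1 := by
    intro k
    fin_cases k
    · show (1 : R2) = monomial (e 0) 1
      rw [e_0, monomial_zero', C_1]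
    · show (X 0 : R2) = monomial (e 1) 1
      rw [e_1, ← X_pow_eq_monomial, pow_one]
    · show (X 1 : R2) = monomial (e 2) 1
      rw [e_2, ← X_pow_eq_monomial, pow_one]
    · show (X 0 * X 1 : R2) = monomial (e 3) 1
      rw [e_3, ← hXX]
    · show (X 1 ^ 2 : R2) = monomial (e 4) 1
      rw [e_4, ← X_pow_eq_monomial]
    · show (X 1 ^ 3 : R2) = monomial (e 5) 1
      rw [e_5, ← X_pow_eq_monomial]
  have hindep : LinearIndependent ℂ
      (fun k : Fin 6 =>
        Ideal.Quotient.mk (Ideal.span {g, pderiv 0 g, pderiv 1 g})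
          ((![1, X 0, X 1, X 0 * X 1, X 1 ^ 2, X 1 ^ 3] : Fin 6 → MvPolynomial (Fin 2) ℂ) k)) := by
    apply LinearIndependent.of_comp f.toLinearMap
    have heq : (f.toLinearMap ∘ fun k : Fin 6 =>
        Ideal.Quotient.mk (Ideal.span {g, pderiv 0 g, pderiv 1 g})
          ((![1, X 0, X 1, X 0 * X 1, X 1 ^ 2, X 1 ^ 3] : Fin 6 → MvPolynomial (Fin 2) ℂ) k)) =
        fun k : Fin 6 => Ideal.Quotient.mk J (monomial (e k) (1 : ℂ)) := by
      funext k
      simp only [Function.comp_apply, AlgHom.toLinearMap_apply, hfmk, hmon]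
    rw [heq]
    exact indepJ
  refine ⟨hindep, ?_⟩
  have h6 := hindep.cardinal_le_rank
  simpa using h6
end

section
/- Let h ∈ ℂ⟦z⟧ be a formal power series of finite order k with k ≥ 1, i.e. h = c_k z^k + (terms of order > k) with c_k ≠ 0. Then h is right equivalent to z^k: there exists a ℂ-algebra automorphism φ of ℂ⟦z⟧ such that φ(h) = z^k. -/
open PowerSeries Finset

namespace StmtAux

variable (g : PowerSeries ℂ)

lemma coeff_pow_eq_zero (hg : constantCoeff g = 0) {m n : ℕ} (hmn : m < n) :
    PowerSeries.coeff m (g ^ n) = 0 := by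
  have hX : (PowerSeries.X : PowerSeries ℂ) ∣ g := by
    rw [PowerSeries.X_dvd_iff]; exact hg
  exact (PowerSeries.X_pow_dvd_iff.mp (pow_dvd_pow_of_dvd hX n)) m hmn

lemma coeff_pow_self (hg : constantCoeff g = 0) (n : ℕ) :
    PowerSeries.coeff n (g ^ n) = (PowerSeries.coeff 1 g) ^ n := by
  induction n with
  | zero => simp
  | succ n ih =>
    rw [pow_succ, PowerSeries.coeff_mul]
    rw [Finset.sum_eq_single (n, 1)]
    · rw [ih]; ring
    · rintro ⟨i, j⟩ hij hne
      rw [Finset.HasAntidiagonal.mem_antidiagonal] at hij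
      rcases lt_trichotomy i n with hi | rfl | hi
      · rw [coeff_pow_eq_zero g hg hi, zero_mul]
      · have hj : j = 1 := by omega
        exact (hne (by rw [hj])).elim
      · have hj : j = 0 := by omega
        have : PowerSeries.coeff j g = 0 := by
          rw [hj, PowerSeries.coeff_zero_eq_constantCoeff, hg]
        rw [this, mul_zero]
    · intro hmem
      simp at hmem

end StmtAux

namespace StmtAux

/-- Substitution of `g` (zero constant term) into `f`. -/
noncomputable def substF (g f : PowerSeries ℂ) : PowerSeries ℂ :=
  PowerSeries.mk fun m => ∑ n ∈ Finset.range (m + 1),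
    PowerSeries.coeff n f * PowerSeries.coeff m (g ^ n)

lemma coeff_substF (g f : PowerSeries ℂ) (m : ℕ) :
    PowerSeries.coeff m (substF g f) =
      ∑ n ∈ Finset.range (m + 1), PowerSeries.coeff n f * PowerSeries.coeff m (g ^ n) := by
  simp [substF]

/-- Lemma A: substF agrees with aeval of truncation. -/
lemma coeff_substF_eq_aeval (g : PowerSeries ℂ) (hg : constantCoeff g = 0)
    (f : PowerSeries ℂ) {m N : ℕ} (hmN : m < N) :
    PowerSeries.coeff m (substF g f) =
      PowerSeries.coeff m (Polynomial.aeval g (PowerSeries.trunc N f)) := by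
  obtain ⟨N, rfl⟩ : ∃ N', N = N' + 1 := ⟨N - 1, by omega⟩
  rw [Polynomial.aeval_eq_sum_range' (PowerSeries.natDegree_trunc_lt f N) g]
  rw [map_sum, coeff_substF]
  rw [Finset.sum_subset (Finset.range_subset_range.mpr (by omega : m + 1 ≤ N + 1))]
  · apply Finset.sum_congr rfl
    intro n hn
    rw [Finset.mem_range] at hn
    rw [PowerSeries.coeff_trunc, if_pos hn, PowerSeries.coeff_smul, smul_eq_mul]
  · intro n _ hn
    rw [Finset.mem_range, not_lt] at hn
    rw [coeff_pow_eq_zero g hg (by omega : m < n), mul_zero]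

/-- Lemma C: aeval of a polynomial with vanishing low coefficients has vanishing low coeffs. -/
lemma coeff_aeval_eq_zero (g : PowerSeries ℂ) (hg : constantCoeff g = 0)
    (q : Polynomial ℂ) {N : ℕ} (hq : ∀ j < N, q.coeff j = 0) {m : ℕ} (hm : m < N) :
    PowerSeries.coeff m (Polynomial.aeval g q) = 0 := by
  rw [Polynomial.aeval_eq_sum_range g, map_sum]
  apply Finset.sum_eq_zero
  intro n _
  rw [PowerSeries.coeff_smul, smul_eq_mul]
  rcases lt_or_ge n N with hn | hn
  · rw [hq n hn, zero_mul]
  · rw [coeff_pow_eq_zero g hg (by omega : m < n), mul_zero]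

end StmtAux

namespace StmtAux

lemma substF_add (g f₁ f₂ : PowerSeries ℂ) :
    substF g (f₁ + f₂) = substF g f₁ + substF g f₂ := by
  ext m
  simp only [coeff_substF, map_add, PowerSeries.coeff_mk, ← Finset.sum_add_distrib]
  exact Finset.sum_congr rfl fun n _ => by ring

lemma substF_one (g : PowerSeries ℂ) : substF g 1 = 1 := by
  ext m
  rw [coeff_substF, Finset.sum_eq_single 0]
  · simp
  · intro n _ hn
    rw [PowerSeries.coeff_one, if_neg hn, zero_mul]
  · intro hmem
    simp at hmem

lemma substF_C (g : PowerSeries ℂ) (a : ℂ) : substF g (PowerSeries.C a) = PowerSeries.C a := by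
  ext m
  rw [coeff_substF, Finset.sum_eq_single 0]
  · cases m <;> simp
  · intro n _ hn
    rw [PowerSeries.coeff_C, if_neg hn, zero_mul]
  · intro hmem
    simp at hmem

lemma substF_mul (g : PowerSeries ℂ) (hg : constantCoeff g = 0) (f₁ f₂ : PowerSeries ℂ) :
    substF g (f₁ * f₂) = substF g f₁ * substF g f₂ := by
  ext m
  set N := m + 1 with hN
  have h1 : PowerSeries.coeff m (substF g (f₁ * f₂)) =
      PowerSeries.coeff m (Polynomial.aeval g (PowerSeries.trunc N (f₁ * f₂))) :=
    coeff_substF_eq_aeval g hg _ (by omega)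
  have h2 : PowerSeries.coeff m (substF g f₁ * substF g f₂) =
      PowerSeries.coeff m
        (Polynomial.aeval g (PowerSeries.trunc N f₁) *
          Polynomial.aeval g (PowerSeries.trunc N f₂)) := by
    rw [PowerSeries.coeff_mul, PowerSeries.coeff_mul]
    apply Finset.sum_congr rfl
    rintro ⟨i, j⟩ hij
    rw [Finset.HasAntidiagonal.mem_antidiagonal] at hij
    rw [coeff_substF_eq_aeval g hg f₁ (by omega : i < N),
      coeff_substF_eq_aeval g hg f₂ (by omega : j < N)]
  rw [h1, h2, ← map_mul]
  have key : PowerSeries.coeff m (Polynomial.aeval g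
      (PowerSeries.trunc N f₁ * PowerSeries.trunc N f₂ - PowerSeries.trunc N (f₁ * f₂))) = 0 := by
    apply coeff_aeval_eq_zero g hg _ _ (show m < N by omega)
    intro j hj
    rw [Polynomial.coeff_sub, Polynomial.coeff_mul, PowerSeries.coeff_trunc, if_pos hj,
      PowerSeries.coeff_mul, sub_eq_zero]
    apply Finset.sum_congr rfl
    rintro ⟨i, l⟩ hil
    rw [Finset.HasAntidiagonal.mem_antidiagonal] at hil
    rw [PowerSeries.coeff_trunc, if_pos (by omega : i < N),
      PowerSeries.coeff_trunc, if_pos (by omega : l < N)]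
  rw [map_sub, map_sub, sub_eq_zero] at key
  exact key.symm

/-- Substitution as an algebra homomorphism. -/
noncomputable def substHom (g : PowerSeries ℂ) (hg : constantCoeff g = 0) :
    PowerSeries ℂ →ₐ[ℂ] PowerSeries ℂ where
  toFun := substF g
  map_one' := substF_one g
  map_mul' := substF_mul g hg
  map_zero' := by
    ext m; simp [coeff_substF]
  map_add' := substF_add g
  commutes' := fun a => by
    simpa [PowerSeries.algebraMap_apply] using substF_C g a

end StmtAux

namespace StmtAux

lemma substF_injective (g : PowerSeries ℂ) (hg : constantCoeff g = 0)
    (hg1 : PowerSeries.coeff 1 g ≠ 0) : Function.Injective (substHom g hg) := by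
  rw [injective_iff_map_eq_zero]
  intro f hf
  ext n
  induction n using Nat.strong_induction_on with
  | _ n ih =>
    have hc : PowerSeries.coeff n (substF g f) = 0 := by
      rw [show substF g f = substHom g hg f from rfl, hf, map_zero]
    rw [coeff_substF, Finset.sum_range_succ] at hc
    have hz : ∑ m ∈ Finset.range n,
        PowerSeries.coeff m f * PowerSeries.coeff n (g ^ m) = 0 :=
      Finset.sum_eq_zero fun m hm => by
        rw [ih m (Finset.mem_range.mp hm)]; simp
    rw [hz, zero_add, coeff_pow_self g hg] at hc
    rw [map_zero]
    rcases mul_eq_zero.mp hc with hcc | hcc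
    · exact hcc
    · exact (pow_ne_zero n hg1 hcc).elim

/-- preimage coefficients for surjectivity -/
noncomputable def pre (g t : PowerSeries ℂ) : ℕ → ℂ
  | n => (PowerSeries.coeff n t - ∑ m ∈ (Finset.range n).attach,
      pre g t m * PowerSeries.coeff n (g ^ (m : ℕ))) / (PowerSeries.coeff 1 g) ^ n
  termination_by n => n
  decreasing_by exact Finset.mem_range.mp m.2

lemma substF_surjective (g : PowerSeries ℂ) (hg : constantCoeff g = 0)
    (hg1 : PowerSeries.coeff 1 g ≠ 0) : Function.Surjective (substHom g hg) := by
  intro t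
  refine ⟨PowerSeries.mk (pre g t), ?_⟩
  ext n
  show PowerSeries.coeff n (substF g (PowerSeries.mk (pre g t))) = _
  rw [coeff_substF, Finset.sum_range_succ]
  have hattach : ∑ m ∈ Finset.range n,
      PowerSeries.coeff m (PowerSeries.mk (pre g t)) * PowerSeries.coeff n (g ^ m) =
      ∑ m ∈ (Finset.range n).attach, pre g t m * PowerSeries.coeff n (g ^ (m : ℕ)) := by
    rw [← Finset.sum_attach]
    exact Finset.sum_congr rfl fun m _ => by rw [PowerSeries.coeff_mk]
  rw [hattach, PowerSeries.coeff_mk, coeff_pow_self g hg, pre]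
  field_simp
  ring

end StmtAux

namespace StmtAux

/-- Lemma D: product of high-order series has vanishing low coefficients. -/
lemma coeff_mul_eq_zero {u v : PowerSeries ℂ} {c d m : ℕ}
    (hu : (PowerSeries.X : PowerSeries ℂ) ^ c ∣ u)
    (hv : (PowerSeries.X : PowerSeries ℂ) ^ d ∣ v) (hm : m < c + d) :
    PowerSeries.coeff m (u * v) = 0 := by
  have : (PowerSeries.X : PowerSeries ℂ) ^ (c + d) ∣ u * v := by
    rw [pow_add]; exact mul_dvd_mul hu hv
  exact (PowerSeries.X_pow_dvd_iff.mp this) m hm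

lemma X_pow_dvd_pow_of_low {t : PowerSeries ℂ} {d : ℕ}
    (ht : ∀ i < d, PowerSeries.coeff i t = 0) (n : ℕ) :
    (PowerSeries.X : PowerSeries ℂ) ^ (d * n) ∣ t ^ n := by
  have : (PowerSeries.X : PowerSeries ℂ) ^ d ∣ t := PowerSeries.X_pow_dvd_iff.mpr ht
  rw [pow_mul]
  exact pow_dvd_pow_of_dvd this n

lemma aux_ineq {s d : ℕ} (hs : 1 ≤ s) (hd : 1 ≤ d) : s + d ≤ d * s + 1 := by
  nlinarith

/-- Lemma B1. -/
lemma coeff_add_pow_eq (t e : PowerSeries ℂ) (ht : constantCoeff t = 0) {d : ℕ}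
    (hd : 1 ≤ d) (he : ∀ i < d, PowerSeries.coeff i e = 0) {n m : ℕ}
    (hm : m + 1 < n + d) :
    PowerSeries.coeff m ((t + e) ^ n) = PowerSeries.coeff m (t ^ n) := by
  rw [add_pow, map_sum]
  rw [Finset.sum_eq_single n]
  · simp
  · intro j hj hjn
    rw [Finset.mem_range] at hj
    have hj' : j < n := by omega
    rw [mul_assoc]
    apply coeff_mul_eq_zero (c := j) (d := d * (n - j))
    · exact pow_dvd_pow_of_dvd (PowerSeries.X_dvd_iff.mpr ht) j
    · exact dvd_mul_of_dvd_left (X_pow_dvd_pow_of_low he (n - j)) _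
    · have h1 : 1 ≤ n - j := by omega
      have h2 : (n - j) + d ≤ d * (n - j) + 1 := aux_ineq h1 hd
      have h3 : n = j + (n - j) := by omega
      omega
  · intro hn; simp at hn

lemma coeff_mul_natCast (p : PowerSeries ℂ) (c m : ℕ) :
    PowerSeries.coeff m (p * (c : PowerSeries ℂ)) = PowerSeries.coeff m p * c := by
  rw [← map_natCast (PowerSeries.C) c, PowerSeries.coeff_mul_C]

/-- coefficient of `t^s * e` at `s + d`. -/
lemma coeff_pow_mul (t e : PowerSeries ℂ) (ht : constantCoeff t = 0) {d : ℕ}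
    (he : ∀ i < d, PowerSeries.coeff i e = 0) (s : ℕ) :
    PowerSeries.coeff (s + d) (t ^ s * e) =
      (PowerSeries.coeff 1 t) ^ s * PowerSeries.coeff d e := by
  rw [PowerSeries.coeff_mul, Finset.sum_eq_single (s, d)]
  · rw [coeff_pow_self t ht]
  · rintro ⟨i, l⟩ hil hne
    rw [Finset.HasAntidiagonal.mem_antidiagonal] at hil
    rcases lt_trichotomy i s with hi | rfl | hi
    · rw [coeff_pow_eq_zero t ht hi, zero_mul]
    · have : l = d := by omega
      exact (hne (by rw [this])).elim
    · rw [he l (by omega), mul_zero]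
  · intro hmem
    exact (hmem (Finset.HasAntidiagonal.mem_antidiagonal.mpr rfl)).elim

/-- Lemma B2. -/
lemma coeff_add_pow_eq' (t e : PowerSeries ℂ) (ht : constantCoeff t = 0) {d : ℕ}
    (hd : 2 ≤ d) (he : ∀ i < d, PowerSeries.coeff i e = 0) (s : ℕ) :
    PowerSeries.coeff (s + d) ((t + e) ^ (s + 1)) =
      PowerSeries.coeff (s + d) (t ^ (s + 1)) +
        (s + 1) * (PowerSeries.coeff 1 t) ^ s * PowerSeries.coeff d e := by
  rw [add_pow, map_sum]
  have hsplit : Finset.range (s + 1 + 1) = insert (s + 1) (insert s (Finset.range s)) := by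
    rw [Finset.range_add_one, Finset.range_add_one]
  rw [hsplit, Finset.sum_insert (by simp), Finset.sum_insert (by simp)]
  have h1 : PowerSeries.coeff (s + d)
      (t ^ (s + 1) * e ^ (s + 1 - (s + 1)) * ((s+1).choose (s+1) : PowerSeries ℂ)) =
      PowerSeries.coeff (s + d) (t ^ (s + 1)) := by
    simp
  have h2 : PowerSeries.coeff (s + d)
      (t ^ s * e ^ (s + 1 - s) * ((s+1).choose s : PowerSeries ℂ)) =
      (s + 1) * (PowerSeries.coeff 1 t) ^ s * PowerSeries.coeff d e := by
    have hs1 : s + 1 - s = 1 := by omega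
    rw [hs1, pow_one, coeff_mul_natCast, coeff_pow_mul t e ht he s,
      Nat.choose_succ_self_right]
    push_cast
    ring
  have h3 : ∀ j ∈ Finset.range s, PowerSeries.coeff (s + d)
      (t ^ j * e ^ (s + 1 - j) * ((s+1).choose j : PowerSeries ℂ)) = 0 := by
    intro j hj
    rw [Finset.mem_range] at hj
    rw [coeff_mul_natCast]
    rw [coeff_mul_eq_zero (c := j) (d := d * (s + 1 - j)), zero_mul]
    · exact pow_dvd_pow_of_dvd (PowerSeries.X_dvd_iff.mpr ht) j
    · exact X_pow_dvd_pow_of_low he (s + 1 - j)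
    · have h4 : 2 ≤ s + 1 - j := by omega
      have h6 : d + (s + 1 - j) ≤ d * (s + 1 - j) := by nlinarith
      omega
  rw [h1, h2, Finset.sum_eq_zero h3, add_zero]

end StmtAux

namespace StmtAux

/-- Recursive coefficients of the series `g` solving `h ∘ g = X ^ k`. -/
noncomputable def G (h : PowerSeries ℂ) (k : ℕ) (a : ℂ) : ℕ → ℂ
  | 0 => 0
  | 1 => a
  | (j + 2) =>
      -(∑ n ∈ Finset.range (j + 2 + k), PowerSeries.coeff n h *
          PowerSeries.coeff (j + 1 + k)
            ((PowerSeries.mk fun i => if _ : i < j + 2 then G h k a i else 0) ^ n)) /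
        (k * PowerSeries.coeff k h * a ^ (k - 1))
  termination_by n => n

/-- truncation of `G` below `j`. -/
noncomputable def tpart (h : PowerSeries ℂ) (k : ℕ) (a : ℂ) (j : ℕ) : PowerSeries ℂ :=
  PowerSeries.mk fun i => if _ : i < j then G h k a i else 0

lemma G_eq (h : PowerSeries ℂ) (k : ℕ) (a : ℂ) (j : ℕ) :
    G h k a (j + 2) =
      -(∑ n ∈ Finset.range (j + 2 + k), PowerSeries.coeff n h *
          PowerSeries.coeff (j + 1 + k) ((tpart h k a (j + 2)) ^ n)) /
        (k * PowerSeries.coeff k h * a ^ (k - 1)) := by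
  rw [G]; rfl

lemma coeff_tpart (h : PowerSeries ℂ) (k : ℕ) (a : ℂ) (j i : ℕ) :
    PowerSeries.coeff i (tpart h k a j) = if i < j then G h k a i else 0 := by
  rw [tpart, PowerSeries.coeff_mk]
  split_ifs with hi <;> rfl

end StmtAux

namespace StmtAux

lemma G_zero (h : PowerSeries ℂ) (k : ℕ) (a : ℂ) : G h k a 0 = 0 := by rw [G]
lemma G_one (h : PowerSeries ℂ) (k : ℕ) (a : ℂ) : G h k a 1 = a := by rw [G]

end StmtAux

open StmtAux in
/-- A formal power series `h ∈ ℂ⟦z⟧` of finite order `k ≥ 1` (that is, the coefficient of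
`z^k` is nonzero and all coefficients in degrees `< k` vanish) is right equivalent to
`z^k`: there is a ℂ-algebra automorphism `φ` of `ℂ⟦z⟧` with `φ(h) = z^k`. -/
theorem stmt_9 (k : ℕ) (hk : 1 ≤ k) (h : PowerSeries ℂ)
    (hck : PowerSeries.coeff k h ≠ 0)
    (hlow : ∀ m : ℕ, m < k → PowerSeries.coeff m h = 0) :
    ∃ φ : PowerSeries ℂ ≃ₐ[ℂ] PowerSeries ℂ, φ h = PowerSeries.X ^ k := by
  classical
  obtain ⟨a, ha⟩ := IsAlgClosed.exists_pow_nat_eq ((PowerSeries.coeff k h)⁻¹) (by omega : 0 < k)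
  have ha0 : a ≠ 0 := by
    intro h0
    rw [h0, zero_pow (by omega : k ≠ 0)] at ha
    exact hck (by simpa using ha.symm)
  set g : PowerSeries ℂ := PowerSeries.mk (G h k a) with hgdef
  have hg0 : PowerSeries.constantCoeff g = 0 := by
    rw [← PowerSeries.coeff_zero_eq_constantCoeff, hgdef, PowerSeries.coeff_mk, G_zero]
  have hg1 : PowerSeries.coeff 1 g = a := by
    rw [hgdef, PowerSeries.coeff_mk, G_one]
  have hg1' : PowerSeries.coeff 1 g ≠ 0 := by rw [hg1]; exact ha0
  -- main computation : substF g h = X ^ k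
  have key : substF g h = PowerSeries.X ^ k := by
    ext m
    rw [coeff_substF, PowerSeries.coeff_X_pow]
    rcases lt_trichotomy m k with hm | rfl | hm
    · rw [if_neg (by omega)]
      exact Finset.sum_eq_zero fun n hn => by
        rw [Finset.mem_range] at hn
        rw [hlow n (by omega), zero_mul]
    · rw [if_pos rfl, Finset.sum_range_succ, Finset.sum_eq_zero (fun n hn => by
        rw [Finset.mem_range] at hn
        rw [hlow n hn, zero_mul]), zero_add, coeff_pow_self g hg0, hg1, ha,
        mul_inv_cancel₀ hck]
    · rw [if_neg (by omega)]
      obtain ⟨j, rfl⟩ : ∃ j, m = j + k + 1 := ⟨m - k - 1, by omega⟩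
      set m := j + k + 1 with hmdef
      set t : PowerSeries ℂ := tpart h k a (j + 2) with htdef
      set e : PowerSeries ℂ := g - t with hedef
      have hge : g = t + e := by rw [hedef]; ring
      have ht0 : PowerSeries.constantCoeff t = 0 := by
        rw [← PowerSeries.coeff_zero_eq_constantCoeff, htdef, coeff_tpart,
          if_pos (by omega), G_zero]
      have ht1 : PowerSeries.coeff 1 t = a := by
        rw [htdef, coeff_tpart, if_pos (by omega), G_one]
      have he : ∀ i < j + 2, PowerSeries.coeff i e = 0 := by
        intro i hi
        rw [hedef, map_sub, hgdef, PowerSeries.coeff_mk, htdef, coeff_tpart, if_pos hi, sub_self]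
      have hed : PowerSeries.coeff (j + 2) e = G h k a (j + 2) := by
        rw [hedef, map_sub, hgdef, PowerSeries.coeff_mk, htdef, coeff_tpart,
          if_neg (by omega), sub_zero]
      have term_eq : ∀ n ∈ Finset.range (m + 1),
          PowerSeries.coeff n h * PowerSeries.coeff m (g ^ n) =
            PowerSeries.coeff n h * PowerSeries.coeff m (t ^ n) +
              (if n = k then PowerSeries.coeff k h *
                (k * a ^ (k - 1) * G h k a (j + 2)) else 0) := by
        intro n hn
        rw [Finset.mem_range] at hn
        rcases lt_trichotomy n k with hnk | hnk | hnk
        · rw [hlow n hnk, zero_mul, zero_mul, if_neg (by omega), add_zero]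
        · rw [hnk, if_pos rfl]
          have hsd : (k - 1) + (j + 2) = m := by omega
          have hs1 : (k - 1) + 1 = k := by omega
          have hB := coeff_add_pow_eq' t e ht0 (by omega : 2 ≤ j + 2) he (k - 1)
          rw [hsd, hs1, ht1, hed] at hB
          rw [hge, hB]
          have hcast : ((k - 1 : ℕ) : ℂ) + 1 = (k : ℂ) := by
            push_cast [Nat.cast_sub (by omega : 1 ≤ k)]
            ring
          rw [hcast]
          ring
        · rw [if_neg (by omega), add_zero, hge,
            coeff_add_pow_eq t e ht0 (by omega : 1 ≤ j + 2) he (by omega : m + 1 < n + (j + 2))]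
      rw [Finset.sum_congr rfl term_eq, Finset.sum_add_distrib,
        Finset.sum_ite_eq' (Finset.range (m + 1)) k, if_pos (Finset.mem_range.mpr (by omega))]
      have hSsum : ∑ n ∈ Finset.range (m + 1),
          PowerSeries.coeff n h * PowerSeries.coeff m (t ^ n) =
          ∑ n ∈ Finset.range (j + 2 + k), PowerSeries.coeff n h *
            PowerSeries.coeff (j + 1 + k) (t ^ n) := by
        have e1 : j + 2 + k = m + 1 := by omega
        have e2 : j + 1 + k = m := by omega
        rw [e1, e2]
      rw [hSsum, G_eq h k a j, ← htdef]
      have hden : (k : ℂ) * PowerSeries.coeff k h * a ^ (k - 1) ≠ 0 := by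
        apply mul_ne_zero (mul_ne_zero _ hck) (pow_ne_zero _ ha0)
        exact_mod_cast (by omega : k ≠ 0)
      have hk0 : (k : ℂ) ≠ 0 := by exact_mod_cast (by omega : k ≠ 0)
      field_simp
      ring
  refine ⟨AlgEquiv.ofBijective (substHom g hg0)
    ⟨substF_injective g hg0 hg1', substF_surjective g hg0 hg1'⟩, ?_⟩
  exact key
end

section
/- Let h₁ ∈ ℂ⟦z,u⟧ lie in the maximal ideal (z,u) and let h₂ ∈ ℂ⟦z⟧, regarded as an element of ℂ⟦z,u⟧. Then u²·(1 + h₁) + h₂ is right equivalent to u² + h₂: there exists a ℂ-algebra automorphism φ of ℂ⟦z,u⟧ with φ(u²·(1 + h₁) + h₂) = u² + h₂. -/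
open MvPowerSeries

noncomputable section Stmt10Aux

namespace Stmt10Aux

local notation "M" => (Fin 2 →₀ ℕ)
local notation "R" => MvPowerSeries (Fin 2) ℂ

/-! ### A substitution operator `z ↦ z`, `u ↦ u * s` on `ℂ⟦z,u⟧`, defined coefficientwise. -/

/-- Substitution `z ↦ z`, `u ↦ u * s`, defined coefficientwise. -/
def T (s : R) (f : R) : R :=
  fun e => ∑ m ∈ Finset.Iic e, coeff m f * coeff (e - m) (s ^ (m 1))

lemma coeff_T (s f : R) (e : M) :
    coeff e (T s f) = ∑ m ∈ Finset.Iic e, coeff m f * coeff (e - m) (s ^ (m 1)) := rfl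

lemma single_add_single (d : M) : Finsupp.single 0 (d 0) + Finsupp.single 1 (d 1) = d := by
  ext i
  fin_cases i <;> simp [Finsupp.single_apply]

lemma coeff_aeval_monomial (s : R) (d : M) (c : ℂ) (e : M) :
    coeff e (MvPolynomial.aeval ![X 0, X 1 * s] (MvPolynomial.monomial d c)) =
      if d ≤ e then c * coeff (e - d) (s ^ (d 1)) else 0 := by
  rw [MvPolynomial.aeval_monomial]
  have hprod : (d.prod fun i k => (![X 0, X 1 * s] : Fin 2 → R) i ^ k)
      = MvPowerSeries.monomial d 1 * s ^ (d 1) := by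
    rw [Finsupp.prod_fintype _ _ (fun i => pow_zero _)]
    rw [Fin.prod_univ_two]
    simp only [Matrix.cons_val_zero, Matrix.cons_val_one, Matrix.head_cons]
    rw [mul_pow, X_pow_eq, X_pow_eq, ← mul_assoc, MvPowerSeries.monomial_mul_monomial,
      one_mul, single_add_single]
  rw [hprod, ← mul_assoc]
  have halg : (algebraMap ℂ R) c * MvPowerSeries.monomial d 1
      = MvPowerSeries.monomial d c := by
    rw [MvPowerSeries.algebraMap_apply, Algebra.algebraMap_self, RingHom.id_apply]
    rw [show (MvPowerSeries.C c) = MvPowerSeries.monomial 0 c from rfl,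
      MvPowerSeries.monomial_mul_monomial, zero_add, mul_one]
  rw [halg, MvPowerSeries.coeff_monomial_mul]

lemma coeff_aeval (s : R) (P : MvPolynomial (Fin 2) ℂ) (e : M) :
    coeff e (MvPolynomial.aeval ![X 0, X 1 * s] P) =
      ∑ m ∈ Finset.Iic e, P.coeff m * coeff (e - m) (s ^ (m 1)) := by
  classical
  conv_lhs => rw [← P.support_sum_monomial_coeff]
  rw [map_sum, map_sum]
  simp_rw [coeff_aeval_monomial]
  rw [← Finset.sum_filter]
  apply Finset.sum_subset
  · intro m hm
    exact Finset.mem_Iic.mpr (Finset.mem_filter.mp hm).2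
  · intro m hm hnm
    have : P.coeff m = 0 := by
      by_contra h
      exact hnm (Finset.mem_filter.mpr ⟨MvPolynomial.mem_support_iff.mpr h, Finset.mem_Iic.mp hm⟩)
    rw [this, zero_mul]

/-- Truncation to the monomials `≤ e`. -/
def truncP (e : M) (f : R) : MvPolynomial (Fin 2) ℂ :=
  ∑ m ∈ Finset.Iic e, MvPolynomial.monomial m (coeff m f)

lemma coeff_truncP (e : M) (f : R) (m : M) :
    (truncP e f).coeff m = if m ≤ e then coeff m f else 0 := by
  classical
  rw [truncP, MvPolynomial.coeff_sum]
  simp_rw [MvPolynomial.coeff_monomial]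
  rw [Finset.sum_ite_eq' (Finset.Iic e) m (fun d => coeff d f)]
  simp [Finset.mem_Iic]

lemma coeff_T_eq_aeval (s f : R) {e c : M} (hce : c ≤ e) :
    coeff c (T s f) = coeff c (MvPolynomial.aeval ![X 0, X 1 * s] (truncP e f)) := by
  rw [coeff_aeval, coeff_T]
  apply Finset.sum_congr rfl
  intro m hm
  rw [coeff_truncP, if_pos (le_trans (Finset.mem_Iic.mp hm) hce)]

lemma T_mul (s f g : R) : T s (f * g) = T s f * T s g := by
  classical
  ext e
  rw [coeff_T_eq_aeval s (f * g) (le_refl e)]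
  have key : coeff e (MvPolynomial.aeval ![X 0, X 1 * s] (truncP e (f * g)))
      = coeff e (MvPolynomial.aeval ![X 0, X 1 * s] (truncP e f * truncP e g)) := by
    rw [coeff_aeval, coeff_aeval]
    apply Finset.sum_congr rfl
    intro m hm
    have hme : m ≤ e := Finset.mem_Iic.mp hm
    congr 1
    rw [coeff_truncP, if_pos hme, MvPolynomial.coeff_mul, MvPowerSeries.coeff_mul]
    apply Finset.sum_congr rfl
    intro p hp
    have hpm : p.1 + p.2 = m := Finset.HasAntidiagonal.mem_antidiagonal.mp hp
    have h1 : p.1 ≤ e := le_trans (le_trans (le_add_right le_rfl : p.1 ≤ p.1 + p.2) hpm.le) hme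
    have h2 : p.2 ≤ e := le_trans (le_trans (le_add_left le_rfl : p.2 ≤ p.1 + p.2) hpm.le) hme
    rw [coeff_truncP, if_pos h1, coeff_truncP, if_pos h2]
  rw [key, map_mul, MvPowerSeries.coeff_mul, MvPowerSeries.coeff_mul]
  apply Finset.sum_congr rfl
  intro p hp
  have hpe : p.1 + p.2 = e := Finset.HasAntidiagonal.mem_antidiagonal.mp hp
  have h1 : p.1 ≤ e := le_trans (le_add_right le_rfl : p.1 ≤ p.1 + p.2) hpe.le
  have h2 : p.2 ≤ e := le_trans (le_add_left le_rfl : p.2 ≤ p.1 + p.2) hpe.le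
  rw [coeff_T_eq_aeval s f h1, coeff_T_eq_aeval s g h2]

lemma T_add (s f g : R) : T s (f + g) = T s f + T s g := by
  ext e
  rw [map_add, coeff_T, coeff_T, coeff_T, ← Finset.sum_add_distrib]
  exact Finset.sum_congr rfl fun m _ => by rw [map_add, add_mul]

lemma T_sub (s f g : R) : T s (f - g) = T s f - T s g := by
  ext e
  rw [map_sub, coeff_T, coeff_T, coeff_T, ← Finset.sum_sub_distrib]
  exact Finset.sum_congr rfl fun m _ => by rw [map_sub, sub_mul]

lemma T_zero (s : R) : T s 0 = 0 := by
  ext e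
  rw [coeff_T]
  simp

/-- `T s` fixes series not involving `u`, given `constantCoeff s = 1`. -/
lemma T_of_vert (s : R) (hs : constantCoeff s = 1) (f : R)
    (hf : ∀ d : M, d 1 ≠ 0 → coeff d f = 0) : T s f = f := by
  ext e
  rw [coeff_T]
  have : ∑ m ∈ Finset.Iic e, coeff m f * coeff (e - m) (s ^ (m 1))
      = coeff e f * coeff (e - e) (s ^ (e 1)) := by
    apply Finset.sum_eq_single_of_mem e (Finset.mem_Iic.mpr le_rfl)
    intro m hm hne
    by_cases h1 : m 1 = 0
    · rw [h1, pow_zero, MvPowerSeries.coeff_one, if_neg, mul_zero]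
      intro h0
      exact hne (le_antisymm (Finset.mem_Iic.mp hm) (tsub_eq_zero_iff_le.mp h0))
    · rw [hf m h1, zero_mul]
  rw [this, tsub_self, coeff_zero_eq_constantCoeff_apply, map_pow, hs, one_pow, mul_one]

lemma T_one (s : R) (hs : constantCoeff s = 1) : T s 1 = 1 :=
  T_of_vert s hs 1 fun d hd => by
    rw [MvPowerSeries.coeff_one, if_neg]
    intro h; exact hd (by rw [h]; rfl)

lemma T_C (s : R) (hs : constantCoeff s = 1) (c : ℂ) :
    T s (C c) = C c :=
  T_of_vert s hs _ fun d hd => by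
    rw [MvPowerSeries.coeff_C, if_neg]
    intro h; exact hd (by rw [h]; rfl)

lemma T_X (s : R) : T s (X 1) = X 1 * s := by
  ext e
  rw [coeff_T]
  simp_rw [MvPowerSeries.coeff_X, ite_mul, one_mul, zero_mul]
  rw [Finset.sum_ite_eq' (Finset.Iic e) (Finsupp.single 1 1)
    (fun m => coeff (e - m) (s ^ (m 1)))]
  rw [show (X 1 : R) = MvPowerSeries.monomial (Finsupp.single 1 1) 1 from rfl,
    MvPowerSeries.coeff_monomial_mul]
  simp [Finset.mem_Iic, Finsupp.single_apply]

lemma Iio_eq_erase (e : M) : Finset.Iio e = (Finset.Iic e).erase e := by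
  ext m
  simp [Finset.mem_Iio, Finset.mem_Iic, Finset.mem_erase, lt_iff_le_and_ne, and_comm]

lemma coeff_T_triangular (s : R) (hs : constantCoeff s = 1) (f : R) (e : M) :
    coeff e (T s f)
      = coeff e f + ∑ m ∈ Finset.Iio e, coeff m f * coeff (e - m) (s ^ (m 1)) := by
  rw [coeff_T, Iio_eq_erase, ← Finset.add_sum_erase _ _ (Finset.mem_Iic.mpr le_rfl),
    tsub_self, coeff_zero_eq_constantCoeff_apply, map_pow, hs, one_pow, mul_one]

lemma T_inj (s : R) (hs : constantCoeff s = 1) : Function.Injective (T s) := by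
  have hker : ∀ f : R, T s f = 0 → f = 0 := by
    intro f hf
    ext e
    refine wellFounded_lt.induction (C := fun e : M => coeff e f = coeff e 0) e ?_
    intro e IH
    have h0 : coeff e (T s f) = 0 := by rw [hf]; simp
    rw [coeff_T_triangular s hs] at h0
    have hsum : ∑ m ∈ Finset.Iio e, coeff m f * coeff (e - m) (s ^ (m 1)) = 0 :=
      Finset.sum_eq_zero fun m hm => by
        have := IH m (Finset.mem_Iio.mp hm)
        simp only [map_zero] at this
        rw [this, zero_mul]
    rw [hsum, add_zero] at h0
    simpa using h0
  intro f g hfg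
  have hsub : T s (f - g) = 0 := by rw [T_sub, hfg, sub_self]
  exact sub_eq_zero.mp (hker _ hsub)

/-- Auxiliary recursion for surjectivity of `T s`. -/
def solveF (s g : R) : (e : M) → ((m : M) → m < e → ℂ) → ℂ := fun e IH =>
  coeff e g - ∑ m ∈ (Finset.Iio e).attach,
    IH m.1 (Finset.mem_Iio.mp m.2) * coeff (e - m.1) (s ^ (m.1 1))

def solveFun (s g : R) : M → ℂ :=
  (wellFounded_lt (α := M)).fix (solveF s g)

lemma solveFun_eq (s g : R) (e : M) :
    solveFun s g e = coeff e g
      - ∑ m ∈ Finset.Iio e, solveFun s g m * coeff (e - m) (s ^ (m 1)) := by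
  have h := WellFounded.fix_eq (wellFounded_lt (α := M)) (solveF s g) e
  refine h.trans ?_
  exact congrArg (fun t => coeff e g - t)
    (Finset.sum_attach (Finset.Iio e) (fun m => solveFun s g m * coeff (e - m) (s ^ (m 1))))

lemma T_surj (s : R) (hs : constantCoeff s = 1) : Function.Surjective (T s) := by
  intro g
  refine ⟨(solveFun s g : M → ℂ), ?_⟩
  ext e
  refine (coeff_T_triangular s hs (solveFun s g) e).trans ?_
  have hcoe : coeff e ((solveFun s g : M → ℂ) : R) = solveFun s g e := rfl
  have hsum : ∑ m ∈ Finset.Iio e,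
        coeff m ((solveFun s g : M → ℂ) : R) * coeff (e - m) (s ^ (m 1))
      = ∑ m ∈ Finset.Iio e, solveFun s g m * coeff (e - m) (s ^ (m 1)) := rfl
  rw [hcoe, hsum, solveFun_eq s g e, sub_add_cancel]

/-- The substitution `z ↦ z`, `u ↦ u·s` as a `ℂ`-algebra homomorphism. -/
def Talg (s : R) (hs : constantCoeff s = 1) : R →ₐ[ℂ] R where
  toFun := T s
  map_one' := T_one s hs
  map_mul' := T_mul s
  map_zero' := T_zero s
  map_add' := T_add s
  commutes' := fun c => by
    rw [MvPowerSeries.algebraMap_apply, Algebra.algebraMap_self, RingHom.id_apply]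
    exact T_C s hs c

/-- The substitution `z ↦ z`, `u ↦ u·s` as a `ℂ`-algebra automorphism. -/
def Tequiv (s : R) (hs : constantCoeff s = 1) : R ≃ₐ[ℂ] R :=
  AlgEquiv.ofBijective (Talg s hs) ⟨T_inj s hs, T_surj s hs⟩

lemma Tequiv_apply (s : R) (hs : constantCoeff s = 1) (f : R) :
    Tequiv s hs f = T s f := rfl

/-! ### Square roots of power series with constant coefficient 1 -/

lemma mem_filter_antidiag_lt {e : M} {p : M × M}
    (hp : p ∈ (Finset.HasAntidiagonal.antidiagonal e).filter fun p => p.1 ≠ 0 ∧ p.2 ≠ 0) :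
    p.1 < e ∧ p.2 < e := by
  obtain ⟨hmem, h1, h2⟩ := Finset.mem_filter.mp hp
  have hsum : p.1 + p.2 = e := Finset.HasAntidiagonal.mem_antidiagonal.mp hmem
  constructor
  · refine lt_of_le_of_ne (hsum ▸ (le_add_right le_rfl : p.1 ≤ p.1 + p.2)) ?_
    intro h
    rw [h] at hsum
    exact h2 (add_eq_left.mp hsum)
  · refine lt_of_le_of_ne (hsum ▸ (le_add_left le_rfl : p.2 ≤ p.1 + p.2)) ?_
    intro h
    rw [h] at hsum
    exact h1 (add_eq_right.mp hsum)

/-- Auxiliary recursion for the square root. -/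
def sqF (t : R) : (e : M) → ((m : M) → m < e → ℂ) → ℂ := fun e IH =>
  if _he : e = 0 then 1 else
    (coeff e t - ∑ p ∈ ((Finset.HasAntidiagonal.antidiagonal e).filter fun p => p.1 ≠ 0 ∧ p.2 ≠ 0).attach,
        IH p.1.1 (mem_filter_antidiag_lt p.2).1 * IH p.1.2 (mem_filter_antidiag_lt p.2).2) / 2

/-- Square root of a power series with constant coefficient 1. -/
def sqrtS (t : R) : R := (wellFounded_lt (α := M)).fix (sqF t)

lemma sqrtS_zero (t : R) : coeff 0 (sqrtS t) = 1 := by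
  have h := WellFounded.fix_eq (wellFounded_lt (α := M)) (sqF t) 0
  refine h.trans ?_
  rw [sqF, dif_pos rfl]

lemma sqrtS_ne (t : R) (e : M) (he : e ≠ 0) :
    coeff e (sqrtS t) = (coeff e t -
      ∑ p ∈ (Finset.HasAntidiagonal.antidiagonal e).filter (fun p => p.1 ≠ 0 ∧ p.2 ≠ 0),
        coeff p.1 (sqrtS t) * coeff p.2 (sqrtS t)) / 2 := by
  have h := WellFounded.fix_eq (wellFounded_lt (α := M)) (sqF t) e
  refine h.trans ?_
  rw [sqF, dif_neg he]
  exact congrArg (fun x => (coeff e t - x) / 2)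
    (Finset.sum_attach _ (fun p : M × M => coeff p.1 (sqrtS t) * coeff p.2 (sqrtS t)))

lemma filter_not_eq {e : M} :
    (Finset.HasAntidiagonal.antidiagonal e).filter (fun p => ¬(p.1 ≠ 0 ∧ p.2 ≠ 0)) = {(0, e), (e, 0)} := by
  ext p
  simp only [Finset.mem_filter, Finset.HasAntidiagonal.mem_antidiagonal, Finset.mem_insert,
    Finset.mem_singleton, not_and_or, not_ne_iff]
  constructor
  · rintro ⟨hsum, h | h⟩
    · left
      have h2 : p.2 = e := by rw [← hsum, h, zero_add]
      exact Prod.ext_iff.mpr ⟨h, h2⟩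
    · right
      have h1 : p.1 = e := by rw [← hsum, h, add_zero]
      exact Prod.ext_iff.mpr ⟨h1, h⟩
  · rintro (rfl | rfl) <;> simp

lemma sqrtS_mul_self (t : R) (ht : constantCoeff t = 1) :
    sqrtS t * sqrtS t = t := by
  classical
  ext e
  rw [MvPowerSeries.coeff_mul]
  by_cases he : e = 0
  · subst he
    rw [Finsupp.antidiagonal_zero, Finset.sum_singleton]
    simp only [sqrtS_zero, one_mul]
    rw [coeff_zero_eq_constantCoeff_apply, ht]
  · rw [← Finset.sum_filter_add_sum_filter_not (Finset.HasAntidiagonal.antidiagonal e)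
      (fun p => p.1 ≠ 0 ∧ p.2 ≠ 0), filter_not_eq]
    have hne : ((0 : M), e) ≠ (e, (0 : M)) := by
      intro h
      exact he ((Prod.ext_iff.mp h).1).symm
    rw [Finset.sum_pair hne, sqrtS_zero, sqrtS_ne t e he, one_mul, mul_one]
    ring

lemma constantCoeff_sqrtS (t : R) : constantCoeff (sqrtS t) = 1 := by
  rw [← coeff_zero_eq_constantCoeff_apply]
  exact sqrtS_zero t

end Stmt10Aux

end Stmt10Aux

open Stmt10Aux in
/-- Let `h₁ ∈ ℂ⟦z,u⟧` lie in the maximal ideal `(z,u)` (i.e. have vanishing constant term)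
and let `h₂ ∈ ℂ⟦z⟧ ⊆ ℂ⟦z,u⟧` (i.e. all its coefficients involving `u` vanish). Then
`u²·(1 + h₁) + h₂` is right equivalent to `u² + h₂`: there is a ℂ-algebra automorphism `φ`
of `ℂ⟦z,u⟧` with `φ(u²·(1 + h₁) + h₂) = u² + h₂`. Here `z = X 0`, `u = X 1`. -/
theorem stmt_10 (h₁ h₂ : MvPowerSeries (Fin 2) ℂ)
    (hh₁ : constantCoeff h₁ = 0)
    (hh₂ : ∀ d : Fin 2 →₀ ℕ, d 1 ≠ 0 → coeff d h₂ = 0) :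
    ∃ φ : MvPowerSeries (Fin 2) ℂ ≃ₐ[ℂ] MvPowerSeries (Fin 2) ℂ,
      φ ((X 1) ^ 2 * (1 + h₁) + h₂) = (X 1) ^ 2 + h₂ := by
  set s : MvPowerSeries (Fin 2) ℂ := sqrtS (1 + h₁) with hsdef
  have hs : constantCoeff s = 1 := constantCoeff_sqrtS (1 + h₁)
  have hsq : s * s = 1 + h₁ :=
    sqrtS_mul_self (1 + h₁) (by rw [map_add, constantCoeff_one, hh₁, add_zero])
  refine ⟨(Tequiv s hs).symm, ?_⟩
  have key : Tequiv s hs ((X 1) ^ 2 + h₂) = (X 1) ^ 2 * (1 + h₁) + h₂ := by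
    have h1 : Tequiv s hs ((X 1) ^ 2 + h₂)
        = (Tequiv s hs (X 1)) ^ 2 + Tequiv s hs h₂ := by
      rw [map_add, map_pow]
    rw [h1, Tequiv_apply, Tequiv_apply, T_X, T_of_vert s hs h₂ hh₂, mul_pow, pow_two s, hsq]
  rw [← key, AlgEquiv.symm_apply_apply]
end

section
/- Let σ be the ℂ-algebra automorphism of ℂ[x,y,z,u] determined by σ(x) = √-1·x, σ(y) = -√-1·y, σ(z) = -z, σ(u) = √-1·u, and let f = x² + y² + z³ + u². Then σ(f) = -f, the Tjurina ideal I = (f, ∂f/∂x, ∂f/∂y, ∂f/∂z, ∂f/∂u) satisfies σ(I) = I, and the subspace of the quotient ℂ[x,y,z,u]/I consisting of images of polynomials h with σ(h) = -h is one-dimensional over ℂ, spanned by the image of z. -/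
open MvPolynomial

/-- The polynomial `f = x² + y² + z³ + u² ∈ ℂ[x,y,z,u]`, with `x, y, z, u` being
`X 0, X 1, X 2, X 3`. -/
noncomputable def fA12quot : MvPolynomial (Fin 4) ℂ :=
  X 0 ^ 2 + X 1 ^ 2 + X 2 ^ 3 + X 3 ^ 2

/-- The Tjurina ideal `(f, ∂f/∂x, ∂f/∂y, ∂f/∂z, ∂f/∂u)` of `f = x² + y² + z³ + u²`. -/
noncomputable def tjurinaA12quot : Ideal (MvPolynomial (Fin 4) ℂ) :=
  Ideal.span {fA12quot, pderiv 0 fA12quot, pderiv 1 fA12quot, pderiv 2 fA12quot,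
    pderiv 3 fA12quot}

lemma pd0 : pderiv 0 fA12quot = 2 * X 0 := by simp [fA12quot]
lemma pd1 : pderiv 1 fA12quot = 2 * X 1 := by simp [fA12quot]
lemma pd2 : pderiv 2 fA12quot = 3 * X 2 ^ 2 := by simp [fA12quot]
lemma pd3 : pderiv 3 fA12quot = 2 * X 3 := by simp [fA12quot]
lemma tj_eq : tjurinaA12quot = Ideal.span ({X 0, X 1, X 2 ^ 2, X 3} : Set (MvPolynomial (Fin 4) ℂ)) := by
  apply le_antisymm
  · rw [tjurinaA12quot, Ideal.span_le]
    have hX0 : (X 0 : MvPolynomial (Fin 4) ℂ) ∈ Ideal.span ({X 0, X 1, X 2 ^ 2, X 3} : Set (MvPolynomial (Fin 4) ℂ)) := Ideal.subset_span (by simp)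
    have hX1 : (X 1 : MvPolynomial (Fin 4) ℂ) ∈ Ideal.span ({X 0, X 1, X 2 ^ 2, X 3} : Set (MvPolynomial (Fin 4) ℂ)) := Ideal.subset_span (by simp)
    have hX2 : (X 2 ^ 2 : MvPolynomial (Fin 4) ℂ) ∈ Ideal.span ({X 0, X 1, X 2 ^ 2, X 3} : Set (MvPolynomial (Fin 4) ℂ)) := Ideal.subset_span (by simp)
    have hX3 : (X 3 : MvPolynomial (Fin 4) ℂ) ∈ Ideal.span ({X 0, X 1, X 2 ^ 2, X 3} : Set (MvPolynomial (Fin 4) ℂ)) := Ideal.subset_span (by simp)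
    rintro g (rfl | rfl | rfl | rfl | rfl)
    · rw [fA12quot]
      refine Ideal.add_mem _ (Ideal.add_mem _ (Ideal.add_mem _ ?_ ?_) ?_) ?_
      · exact Ideal.pow_mem_of_mem _ hX0 2 (by norm_num)
      · exact Ideal.pow_mem_of_mem _ hX1 2 (by norm_num)
      · have h23 : (X 2 : MvPolynomial (Fin 4) ℂ) ^ 3 = X 2 * X 2 ^ 2 := by ring
        rw [h23]; exact Ideal.mul_mem_left _ _ hX2
      · exact Ideal.pow_mem_of_mem _ hX3 2 (by norm_num)
    · rw [pd0]; exact Ideal.mul_mem_left _ _ hX0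
    · rw [pd1]; exact Ideal.mul_mem_left _ _ hX1
    · rw [pd2]; exact Ideal.mul_mem_left _ _ hX2
    · rw [pd3]; exact Ideal.mul_mem_left _ _ hX3
  · rw [Ideal.span_le]
    have m0 : pderiv 0 fA12quot ∈ tjurinaA12quot := Ideal.subset_span (by simp)
    have m1 : pderiv 1 fA12quot ∈ tjurinaA12quot := Ideal.subset_span (by simp)
    have m2 : pderiv 2 fA12quot ∈ tjurinaA12quot := Ideal.subset_span (by simp)
    have m3 : pderiv 3 fA12quot ∈ tjurinaA12quot := Ideal.subset_span (by simp)
    rintro g (rfl | rfl | rfl | rfl)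
    · have : (X 0 : MvPolynomial (Fin 4) ℂ) = C 2⁻¹ * pderiv 0 fA12quot := by
        rw [pd0, (map_ofNat C 2).symm, ← mul_assoc, ← C_mul]
        norm_num
      rw [this]; exact Ideal.mul_mem_left _ _ m0
    · have : (X 1 : MvPolynomial (Fin 4) ℂ) = C 2⁻¹ * pderiv 1 fA12quot := by
        rw [pd1, (map_ofNat C 2).symm, ← mul_assoc, ← C_mul]
        norm_num
      rw [this]; exact Ideal.mul_mem_left _ _ m1
    · have : (X 2 ^ 2 : MvPolynomial (Fin 4) ℂ) = C 3⁻¹ * pderiv 2 fA12quot := by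
        rw [pd2, (map_ofNat C 3).symm, ← mul_assoc, ← C_mul]
        norm_num
      rw [this]; exact Ideal.mul_mem_left _ _ m2
    · have : (X 3 : MvPolynomial (Fin 4) ℂ) = C 2⁻¹ * pderiv 3 fA12quot := by
        rw [pd3, (map_ofNat C 2).symm, ← mul_assoc, ← C_mul]
        norm_num
      rw [this]; exact Ideal.mul_mem_left _ _ m3
noncomputable def Jspan : Ideal (MvPolynomial (Fin 4) ℂ) := Ideal.span ({X 0, X 1, X 2 ^ 2, X 3} : Set (MvPolynomial (Fin 4) ℂ))

lemma mono_mem (d : Fin 4 →₀ ℕ) (c : ℂ) (h0 : d ≠ 0) (h1 : d ≠ Finsupp.single 2 1) :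
    monomial d c ∈ Jspan := by
  have key : ∀ g ∈ ({X 0, X 1, X 2 ^ 2, X 3} : Set (MvPolynomial (Fin 4) ℂ)),
      g ∣ monomial d c → monomial d c ∈ Jspan := by
    intro g hg hdvd
    exact Ideal.span_mono (Set.singleton_subset_iff.2 hg) (Ideal.mem_span_singleton.2 hdvd)
  by_cases hd0 : d 0 ≠ 0
  · exact key _ (by simp) (X_dvd_monomial.2 (Or.inr hd0))
  by_cases hd1 : d 1 ≠ 0
  · exact key _ (by simp) (X_dvd_monomial.2 (Or.inr hd1))
  by_cases hd3 : d 3 ≠ 0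
  · exact key _ (by simp) (X_dvd_monomial.2 (Or.inr hd3))
  push_neg at hd0 hd1 hd3
  have hd2 : 2 ≤ d 2 := by
    rcases Nat.lt_or_ge (d 2) 2 with h | h
    · interval_cases h2 : d 2
      · exact absurd (Finsupp.ext fun i => by fin_cases i <;> simp [hd0, hd1, hd3, h2]) h0
      · exact absurd (Finsupp.ext fun i => by
          fin_cases i <;> simp [hd0, hd1, hd3, h2, Finsupp.single_apply]) h1
    · exact h
  refine key (X 2 ^ 2) (by simp) ?_
  rw [show (X 2 : MvPolynomial (Fin 4) ℂ) ^ 2 = monomial (Finsupp.single 2 2) 1 from X_pow_eq_monomial ..]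
  exact monomial_dvd_monomial.2 ⟨Or.inr (Finsupp.single_le_iff.2 hd2), one_dvd _⟩

lemma keylem (h : MvPolynomial (Fin 4) ℂ) :
    h - C (coeff 0 h) - C (coeff (Finsupp.single 2 1) h) * X 2 ∈ Jspan := by
  induction h using MvPolynomial.induction_on' with
  | add p q hp hq =>
    have := Ideal.add_mem _ hp hq
    convert this using 1
    simp only [coeff_add, map_add]
    ring
  | monomial d c =>
    by_cases hd : d = 0
    · subst hd
      simp only [coeff_monomial]
      have : Finsupp.single 2 1 ≠ (0 : Fin 4 →₀ ℕ) := by simp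
      simp [monomial_zero', coeff_monomial, this.symm]
    by_cases hd2 : d = Finsupp.single 2 1
    · subst hd2
      have hC : (C c * X 2 : MvPolynomial (Fin 4) ℂ) = monomial (Finsupp.single 2 1) c := by
        rw [show (X 2 : MvPolynomial (Fin 4) ℂ) = monomial (Finsupp.single 2 1) 1 from rfl,
          C_mul_monomial, mul_one]
      rw [coeff_monomial, coeff_monomial, if_neg (by simp), if_pos rfl, map_zero, sub_zero, hC,
        sub_self]
      exact Ideal.zero_mem _
    · rw [coeff_monomial, if_neg (Ne.symm hd ∘ Eq.symm), coeff_monomial, if_neg hd2, map_zero, sub_zero, zero_mul, sub_zero]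

      exact mono_mem d c hd hd2

lemma tj_eq' : tjurinaA12quot = Jspan := tj_eq



/-- Let `σ` be the ℂ-algebra automorphism of `ℂ[x,y,z,u]` with `σ(x) = √-1·x`,
`σ(y) = -√-1·y`, `σ(z) = -z`, `σ(u) = √-1·u`, and `f = x² + y² + z³ + u²`. Then
`σ(f) = -f`, the Tjurina ideal `I = (f, ∂f/∂x, ∂f/∂y, ∂f/∂z, ∂f/∂u)` satisfies
`σ(I) = I`, and the subspace of `ℂ[x,y,z,u]/I` consisting of the images of polynomials
`h` with `σ(h) = -h` is the one-dimensional ℂ-subspace spanned by the image of `z`. -/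
theorem stmt_11 (σ : MvPolynomial (Fin 4) ℂ ≃ₐ[ℂ] MvPolynomial (Fin 4) ℂ)
    (hx : σ (X 0) = C Complex.I * X 0) (hy : σ (X 1) = -(C Complex.I) * X 1)
    (hz : σ (X 2) = -X 2) (hu : σ (X 3) = C Complex.I * X 3) :
    σ fA12quot = -fA12quot ∧
    tjurinaA12quot.map σ.toAlgHom.toRingHom = tjurinaA12quot ∧
    Submodule.map (Ideal.Quotient.mkₐ ℂ tjurinaA12quot).toLinearMap
        (LinearMap.ker (σ.toLinearMap + LinearMap.id)) =
      Submodule.span ℂ {Ideal.Quotient.mk tjurinaA12quot (X 2)} ∧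
    Module.finrank ℂ
      ↥(Submodule.span ℂ {Ideal.Quotient.mk tjurinaA12quot (X 2)}) = 1 := by
  have hIinv : (-Complex.I) * Complex.I = 1 := by simp [Complex.I_mul_I]
  have hIinv' : Complex.I * (-Complex.I) = 1 := by simp [Complex.I_mul_I]
  refine ⟨?_, ?_, ?_, ?_⟩
  · simp [fA12quot, hx, hy, hz, hu, mul_pow, ← C_pow, Complex.I_sq]
    ring
  · rw [tj_eq', Jspan, Ideal.map_span]
    have e0 : σ.toAlgHom.toRingHom (X 0) = C Complex.I * X 0 := hx
    have e1 : σ.toAlgHom.toRingHom (X 1) = -(C Complex.I) * X 1 := hy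
    have e3 : σ.toAlgHom.toRingHom (X 3) = C Complex.I * X 3 := hu
    have e2 : σ.toAlgHom.toRingHom (X 2 ^ 2) = X 2 ^ 2 := by
      show σ (X 2 ^ 2) = X 2 ^ 2
      rw [map_pow, hz, neg_sq]
    apply le_antisymm
    · rw [Ideal.span_le]
      rintro g ⟨x, (rfl | rfl | rfl | rfl), rfl⟩
      · rw [e0]; exact Ideal.mul_mem_left _ _ (Ideal.subset_span (by simp))
      · rw [e1]; exact Ideal.mul_mem_left _ _ (Ideal.subset_span (by simp))
      · rw [e2]; exact Ideal.subset_span (by simp)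
      · rw [e3]; exact Ideal.mul_mem_left _ _ (Ideal.subset_span (by simp))
    · rw [Ideal.span_le]
      rintro g (rfl | rfl | rfl | rfl)
      · have hmem := Ideal.mul_mem_left _ (C (-Complex.I))
          (Ideal.subset_span (Set.mem_image_of_mem σ.toAlgHom.toRingHom
            (show (X 0 : MvPolynomial (Fin 4) ℂ) ∈ ({X 0, X 1, X 2 ^ 2, X 3} : Set (MvPolynomial (Fin 4) ℂ)) by simp)))
        rwa [e0, ← mul_assoc, ← C_mul, hIinv, C_1, one_mul] at hmem
      · have hmem := Ideal.mul_mem_left _ (C (-Complex.I))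
          (Ideal.subset_span (Set.mem_image_of_mem σ.toAlgHom.toRingHom
            (show (X 1 : MvPolynomial (Fin 4) ℂ) ∈ ({X 0, X 1, X 2 ^ 2, X 3} : Set (MvPolynomial (Fin 4) ℂ)) by simp)))
        rw [e1, neg_mul, mul_neg, ← mul_assoc, ← C_mul, hIinv, C_1, one_mul] at hmem
        simpa using neg_mem hmem
      · have hmem := Ideal.subset_span (Set.mem_image_of_mem σ.toAlgHom.toRingHom
            (show (X 2 ^ 2 : MvPolynomial (Fin 4) ℂ) ∈ ({X 0, X 1, X 2 ^ 2, X 3} : Set (MvPolynomial (Fin 4) ℂ)) by simp))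
        rwa [e2] at hmem
      · have hmem := Ideal.mul_mem_left _ (C (-Complex.I))
          (Ideal.subset_span (Set.mem_image_of_mem σ.toAlgHom.toRingHom
            (show (X 3 : MvPolynomial (Fin 4) ℂ) ∈ ({X 0, X 1, X 2 ^ 2, X 3} : Set (MvPolynomial (Fin 4) ℂ)) by simp)))
        rwa [e3, ← mul_assoc, ← C_mul, hIinv, C_1, one_mul] at hmem
  · apply le_antisymm
    · rintro p hp
      obtain ⟨h, hker, rfl⟩ := hp
      have hσh : σ h = -h := by
        have := LinearMap.mem_ker.1 hker
        simp only [LinearMap.add_apply, LinearMap.id_apply, AlgEquiv.toLinearMap_apply] at this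
        linear_combination (norm := module) this
      -- constant coefficient vanishes
      have hEσ : (aeval (0 : Fin 4 → ℂ)).comp σ.toAlgHom = aeval (0 : Fin 4 → ℂ) := by
        apply algHom_ext; intro i; fin_cases i <;> simp [hx, hy, hz, hu]
      have hconst : constantCoeff h = 0 := by
        have h1 : aeval (0 : Fin 4 → ℂ) (σ h) = aeval (0 : Fin 4 → ℂ) h := AlgHom.congr_fun hEσ h
        rw [hσh, map_neg] at h1
        have : aeval (0 : Fin 4 → ℂ) h = 0 := by linear_combination (-(1:ℂ)/2) * h1
        simpa using this
      have hkey := keylem h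
      have hc0 : coeff 0 h = constantCoeff h := rfl
      rw [hc0, hconst, map_zero, sub_zero] at hkey
      set b := coeff (Finsupp.single 2 1) h with hb
      show (Ideal.Quotient.mkₐ ℂ tjurinaA12quot).toLinearMap h ∈ _
      rw [Submodule.mem_span_singleton]
      refine ⟨b, ?_⟩
      have hmk : (Ideal.Quotient.mkₐ ℂ tjurinaA12quot).toLinearMap h
          = Ideal.Quotient.mk tjurinaA12quot h := by simp [Ideal.Quotient.mkₐ_eq_mk]
      rw [hmk]
      have : b • Ideal.Quotient.mk tjurinaA12quot (X 2)
          = Ideal.Quotient.mk tjurinaA12quot (C b * X 2) := by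
        rw [← smul_eq_C_mul, ← Ideal.Quotient.mkₐ_eq_mk ℂ, map_smul]
      rw [this, Ideal.Quotient.mk_eq_mk_iff_sub_mem]
      have : C b * X 2 - h = -(h - C b * X 2) := by ring
      rw [this, tj_eq']
      exact neg_mem hkey
    · rw [Submodule.span_le, Set.singleton_subset_iff]
      refine Submodule.mem_map.2 ⟨X 2, ?_, ?_⟩
      · rw [LinearMap.mem_ker]
        simp [hz]
      · simp [Ideal.Quotient.mkₐ_eq_mk]
  · have hne : Ideal.Quotient.mk tjurinaA12quot (X 2) ≠ 0 := by
      rw [Ne, Ideal.Quotient.eq_zero_iff_mem, tj_eq', Jspan]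
      intro hmem
      have hker : Ideal.span ({X 0, X 1, X 2 ^ 2, X 3} : Set (MvPolynomial (Fin 4) ℂ))
          ≤ RingHom.ker (aeval (R := ℂ) ![0, 0, (DualNumber.eps : DualNumber ℂ), 0]).toRingHom := by
        rw [Ideal.span_le]
        rintro g (rfl | rfl | rfl | rfl) <;>
          simp [RingHom.mem_ker, sq, DualNumber.eps_mul_eps]
      have h0 : (DualNumber.eps : DualNumber ℂ) = 0 := by
        have := hker hmem
        simpa [RingHom.mem_ker] using this
      have := congrArg TrivSqZeroExt.snd h0
      simp at this
    exact finrank_span_singleton hne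
end

section
/- Let g ∈ ℂ⟦z,u⟧ be a formal power series, written g = Σ_{i,j} a_{i,j} z^i u^j, such that: (1) a_{i,j} ≠ 0 implies 2i + j ≡ 2 (mod 4) and i + j ≥ 2; (2) a_{0,2} ≠ 0; (3) the ℂ-vector space ℂ⟦z,u⟧/(g, ∂g/∂z, ∂g/∂u) is finite-dimensional. Then there exists a positive integer i₀ and a ℂ-algebra automorphism φ of ℂ⟦z,u⟧ such that φ(g) = z^{2i₀+1} + u². -/
namespace StmtAux
open PowerSeries Finset

section Sub
variable {A : Type*} [CommRing A]

theorem coeff_XS_pow (S : PowerSeries A) {m n : ℕ} (h : m < n) :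
    PowerSeries.coeff m ((PowerSeries.X * S) ^ n) = 0 := by
  rw [mul_pow, PowerSeries.coeff_X_pow_mul', if_neg (by omega)]

noncomputable def subFun (S : PowerSeries A) (f : PowerSeries A) : PowerSeries A :=
  PowerSeries.mk fun m => ∑ n ∈ Finset.range (m + 1),
    PowerSeries.coeff n f * PowerSeries.coeff m ((PowerSeries.X * S) ^ n)

theorem coeff_subFun (S f : PowerSeries A) {m N : ℕ} (h : m < N) :
    PowerSeries.coeff m (subFun S f) = ∑ n ∈ Finset.range N,
      PowerSeries.coeff n f * PowerSeries.coeff m ((PowerSeries.X * S) ^ n) := by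
  rw [subFun, PowerSeries.coeff_mk]
  apply Finset.sum_subset (by intro x hx; simp at *; omega)
  intro x _ hx
  rw [coeff_XS_pow S (by simp at hx; omega), mul_zero]

theorem subFun_mul (S f g : PowerSeries A) : subFun S (f * g) = subFun S f * subFun S g := by
  ext m
  set N := m + 1 with hN
  have hmN : m < N := by omega
  have key : ∀ F : ℕ × ℕ → A,
      (∑ n ∈ range N, ∑ p ∈ Finset.HasAntidiagonal.antidiagonal n, F p) =
        ∑ p ∈ (range N ×ˢ range N).filter (fun p => p.1 + p.2 < N), F p := by
    intro F
    rw [← Finset.sum_biUnion]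
    · congr 1
      ext p
      simp only [Finset.mem_biUnion, Finset.mem_range, Finset.HasAntidiagonal.mem_antidiagonal,
        Finset.mem_filter, Finset.mem_product]
      constructor
      · rintro ⟨n, hn, rfl⟩; omega
      · rintro ⟨⟨h1, h2⟩, h3⟩; exact ⟨p.1 + p.2, h3, rfl⟩
    · intro a _ b _ hab
      simp only [Finset.disjoint_left, Finset.HasAntidiagonal.mem_antidiagonal]
      intro p hp hq; exact hab (hp ▸ hq ▸ rfl)
  have lhs : PowerSeries.coeff m (subFun S (f * g)) =
      ∑ p ∈ range N ×ˢ range N, PowerSeries.coeff p.1 f * PowerSeries.coeff p.2 g *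
        PowerSeries.coeff m ((PowerSeries.X * S) ^ (p.1 + p.2)) := by
    rw [coeff_subFun S _ hmN]
    have : ∀ n ∈ range N, PowerSeries.coeff n (f * g) *
        PowerSeries.coeff m ((PowerSeries.X * S) ^ n) =
        ∑ p ∈ Finset.HasAntidiagonal.antidiagonal n, PowerSeries.coeff p.1 f * PowerSeries.coeff p.2 g *
          PowerSeries.coeff m ((PowerSeries.X * S) ^ (p.1 + p.2)) := by
      intro n _
      rw [PowerSeries.coeff_mul, Finset.sum_mul]
      refine Finset.sum_congr rfl fun p hp => ?_
      rw [Finset.HasAntidiagonal.mem_antidiagonal] at hp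
      rw [hp]
    rw [Finset.sum_congr rfl this, key]
    apply Finset.sum_subset (Finset.filter_subset _ _)
    intro p hp hp2
    rw [Finset.mem_filter, not_and] at hp2
    have h3 : ¬ p.1 + p.2 < N := hp2 hp
    rw [coeff_XS_pow S (by omega), mul_zero]
  have rhs : PowerSeries.coeff m (subFun S f * subFun S g) =
      ∑ p ∈ range N ×ˢ range N, PowerSeries.coeff p.1 f * PowerSeries.coeff p.2 g *
        PowerSeries.coeff m ((PowerSeries.X * S) ^ (p.1 + p.2)) := by
    rw [PowerSeries.coeff_mul]
    have : ∀ q ∈ Finset.HasAntidiagonal.antidiagonal m,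
        PowerSeries.coeff q.1 (subFun S f) * PowerSeries.coeff q.2 (subFun S g) =
        ∑ p ∈ range N ×ˢ range N, PowerSeries.coeff p.1 f * PowerSeries.coeff p.2 g *
          (PowerSeries.coeff q.1 ((PowerSeries.X * S) ^ p.1) *
           PowerSeries.coeff q.2 ((PowerSeries.X * S) ^ p.2)) := by
      intro q hq
      rw [Finset.HasAntidiagonal.mem_antidiagonal] at hq
      rw [coeff_subFun S f (show q.1 < N by omega), coeff_subFun S g (show q.2 < N by omega),
        Finset.sum_mul_sum, ← Finset.sum_product']
      refine Finset.sum_congr rfl fun p _ => by ring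
    rw [Finset.sum_congr rfl this, Finset.sum_comm]
    refine Finset.sum_congr rfl fun p _ => ?_
    rw [← Finset.mul_sum]
    congr 1
    rw [pow_add, PowerSeries.coeff_mul]
  rw [lhs, rhs]


theorem subFun_add (S f g : PowerSeries A) : subFun S (f + g) = subFun S f + subFun S g := by
  ext m
  rw [map_add, coeff_subFun S _ (Nat.lt_succ_self m), coeff_subFun S f (Nat.lt_succ_self m),
    coeff_subFun S g (Nat.lt_succ_self m), ← Finset.sum_add_distrib]
  refine Finset.sum_congr rfl fun n _ => ?_
  rw [map_add, add_mul]

theorem subFun_zero (S : PowerSeries A) : subFun S 0 = 0 := by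
  ext m
  rw [coeff_subFun S _ (Nat.lt_succ_self m)]
  simp

theorem subFun_C (S : PowerSeries A) (a : A) : subFun S (PowerSeries.C a) = PowerSeries.C a := by
  ext m
  rw [coeff_subFun S _ (Nat.lt_succ_self m), Finset.sum_eq_single 0]
  · simp [PowerSeries.coeff_C]
  · intro n _ hn
    rw [PowerSeries.coeff_C, if_neg hn, zero_mul]
  · simp

theorem subFun_one (S : PowerSeries A) : subFun S 1 = 1 := by
  have := subFun_C S 1
  rwa [map_one] at this

theorem subFun_X (S : PowerSeries A) : subFun S PowerSeries.X = PowerSeries.X * S := by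
  ext m
  rw [coeff_subFun S _ (show m < m + 2 by omega), Finset.sum_eq_single 1]
  · simp
  · intro n _ hn
    rw [PowerSeries.coeff_X, if_neg hn, zero_mul]
  · intro h
    exact absurd (Finset.mem_range.mpr (by omega)) h



variable {A : Type*} [CommRing A]

theorem coeff_XS_pow_self (S : PowerSeries A) (m : ℕ) :
    PowerSeries.coeff m ((PowerSeries.X * S) ^ m) = (PowerSeries.constantCoeff S) ^ m := by
  rw [mul_pow, PowerSeries.coeff_X_pow_mul', if_pos le_rfl, Nat.sub_self,
    PowerSeries.coeff_zero_eq_constantCoeff, map_pow]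

theorem coeff_subFun_triangle (S f : PowerSeries A) (m : ℕ) :
    PowerSeries.coeff m (subFun S f) =
      PowerSeries.coeff m f * (PowerSeries.constantCoeff S) ^ m +
      ∑ n ∈ Finset.range m, PowerSeries.coeff n f *
        PowerSeries.coeff m ((PowerSeries.X * S) ^ n) := by
  rw [coeff_subFun S f (Nat.lt_succ_self m), Finset.sum_range_succ, coeff_XS_pow_self, add_comm]

section Bij
variable (S : PowerSeries A) (u : Aˣ) (h : PowerSeries A)

noncomputable def solveVal (prev : ℕ → A) (m : ℕ) : A :=
  ((u⁻¹ : Aˣ) : A) ^ m * (PowerSeries.coeff m h -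
    ∑ n ∈ Finset.range m, prev n * PowerSeries.coeff m ((PowerSeries.X * S) ^ n))

noncomputable def solveAux : ℕ → ℕ → A
  | 0 => fun _ => 0
  | (m+1) => Function.update (solveAux m) m (solveVal S u h (solveAux m) m)

noncomputable def solve (m : ℕ) : A := solveAux S u h (m+1) m

theorem solveAux_eq : ∀ m k, k < m → solveAux S u h m k = solve S u h k := by
  intro m
  induction m with
  | zero => omega
  | succ m ih =>
    intro k hk
    rcases Nat.lt_succ_iff_lt_or_eq.mp hk with h' | rfl
    · rw [solveAux, Function.update_of_ne (by omega), ih k h']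
    · rfl

theorem solve_spec (m : ℕ) : solve S u h m = ((u⁻¹ : Aˣ) : A) ^ m *
    (PowerSeries.coeff m h - ∑ n ∈ Finset.range m, solve S u h n *
      PowerSeries.coeff m ((PowerSeries.X * S) ^ n)) := by
  show solveAux S u h (m+1) m = _
  rw [solveAux, Function.update_self, solveVal]
  congr 2
  refine Finset.sum_congr rfl fun n hn => ?_
  rw [solveAux_eq S u h m n (Finset.mem_range.mp hn)]

theorem subFun_solve (hu : (u : A) = PowerSeries.constantCoeff S) :
    subFun S (PowerSeries.mk (solve S u h)) = h := by
  ext m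
  rw [coeff_subFun_triangle, PowerSeries.coeff_mk, solve_spec]
  have key : ((u⁻¹ : Aˣ) : A) ^ m * (PowerSeries.constantCoeff S) ^ m = 1 := by
    rw [← hu, ← mul_pow, Units.inv_mul, one_pow]
  simp only [PowerSeries.coeff_mk]
  rw [mul_right_comm, key, one_mul, sub_add_cancel]

end Bij



variable {A : Type*} [CommRing A]

theorem coeff_mul_high (m : ℕ) (w r : PowerSeries A) (hr : ∀ n < m, PowerSeries.coeff n r = 0) :
    PowerSeries.coeff m (w * r) =
      PowerSeries.constantCoeff w * PowerSeries.coeff m r := by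
  rw [PowerSeries.coeff_mul, Finset.sum_eq_single (0, m)]
  · rw [PowerSeries.coeff_zero_eq_constantCoeff]
  · rintro ⟨a, b⟩ hab hne
    rw [Finset.HasAntidiagonal.mem_antidiagonal] at hab
    have hb : b < m := by
      rcases Nat.lt_or_ge b m with h | h
      · exact h
      · exfalso; apply hne; have : b = m := by omega
        have : a = 0 := by omega
        simp_all
    rw [hr b hb, mul_zero]
  · intro h; exact absurd (Finset.HasAntidiagonal.mem_antidiagonal.mpr (by omega)) h

theorem coeff_pow_key (m : ℕ) (hm : 1 ≤ m) (k : ℕ) (s p : PowerSeries A)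
    (hagree : ∀ n < m, PowerSeries.coeff n p = PowerSeries.coeff n s)
    (hpm : PowerSeries.coeff m p = 0) :
    PowerSeries.coeff m (s ^ k) = PowerSeries.coeff m (p ^ k) +
      (k : A) * (PowerSeries.constantCoeff p) ^ (k - 1) * PowerSeries.coeff m s := by
  set r := s - p with hrdef
  have hr : ∀ n < m, PowerSeries.coeff n r = 0 := by
    intro n hn; rw [hrdef, map_sub, hagree n hn, sub_self]
  have hrm : PowerSeries.coeff m r = PowerSeries.coeff m s := by
    rw [hrdef, map_sub, hpm, sub_zero]
  have hs : s = p + r := by rw [hrdef]; ring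
  rw [hs, add_pow, map_sum]
  cases k with
  | zero => simp
  | succ k' =>
    rw [Finset.sum_range_succ, Finset.sum_range_succ]
    have h1 : PowerSeries.coeff m (p ^ (k' + 1) * r ^ (k' + 1 - (k' + 1)) *
        (((k' + 1).choose (k' + 1) : ℕ) : PowerSeries A)) = PowerSeries.coeff m (p ^ (k' + 1)) := by
      simp
    have h2 : PowerSeries.coeff m (p ^ k' * r ^ (k' + 1 - k') * (((k' + 1).choose k' : ℕ) : PowerSeries A)) =
        ((k' + 1 : ℕ) : A) * (PowerSeries.constantCoeff p) ^ k' *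
          PowerSeries.coeff m r := by
      rw [Nat.add_sub_cancel_left, pow_one, Nat.choose_succ_self_right]
      rw [show ((k' + 1 : ℕ) : PowerSeries A) = PowerSeries.C ((k' + 1 : ℕ) : A) by
        rw [map_natCast]]
      rw [mul_comm (p ^ k' * r) _, PowerSeries.coeff_C_mul, coeff_mul_high m _ r hr, map_pow]
      ring
    have h3 : ∀ i ∈ Finset.range k', PowerSeries.coeff m (p ^ i * r ^ (k' + 1 - i) *
        (((k' + 1).choose i : ℕ) : PowerSeries A)) = 0 := by
      intro i hi
      rw [Finset.mem_range] at hi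
      have e1 : k' + 1 - i = (k' - 1 - i) + 1 + 1 := by omega
      have e2 : p ^ i * r ^ (k' + 1 - i) * ((k' + 1).choose i : ℕ) =
          ((p ^ i * r ^ (k' - 1 - i) * ((k' + 1).choose i : ℕ)) * r) * r := by
        rw [e1, pow_add, pow_add, pow_one]; ring
      rw [e2, coeff_mul_high m _ r hr, map_mul]
      have : PowerSeries.constantCoeff r = 0 := by
        rw [← PowerSeries.coeff_zero_eq_constantCoeff]; exact hr 0 hm
      rw [this, mul_zero, zero_mul]
    rw [Finset.sum_eq_zero h3, zero_add, h1, h2, hrm]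
    push_cast
    rw [map_add, hpm, zero_add, hrm]
    ring



variable {A : Type*} [CommRing A]

section Root
variable (k : ℕ) (f : PowerSeries A) (s0 v : A)

noncomputable def rootAux : ℕ → ℕ → A
  | 0 => fun _ => 0
  | (m + 1) => Function.update (rootAux m) m
      (if m = 0 then s0 else
        v * (PowerSeries.coeff m f -
          PowerSeries.coeff m ((PowerSeries.mk fun n => if n < m then rootAux m n else 0) ^ k)))

noncomputable def rootFun (m : ℕ) : A := rootAux k f s0 v (m + 1) m

theorem rootAux_eq : ∀ m n, n < m → rootAux k f s0 v m n = rootFun k f s0 v n := by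
  intro m
  induction m with
  | zero => omega
  | succ m ih =>
    intro n hn
    rcases Nat.lt_succ_iff_lt_or_eq.mp hn with h' | rfl
    · rw [rootAux, Function.update_of_ne (by omega), ih n h']
    · rfl

theorem rootFun_zero : rootFun k f s0 v 0 = s0 := by
  show rootAux k f s0 v 1 0 = s0
  rw [rootAux, Function.update_self, if_pos rfl]

theorem rootFun_spec (m : ℕ) (hm : m ≠ 0) :
    rootFun k f s0 v m = v * (PowerSeries.coeff m f -
      PowerSeries.coeff m ((PowerSeries.mk fun n => if n < m then rootFun k f s0 v n else 0) ^ k)) := by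
  show rootAux k f s0 v (m + 1) m = _
  rw [rootAux, Function.update_self, if_neg hm]
  have hmk : (PowerSeries.mk fun n => if n < m then rootAux k f s0 v m n else 0) =
      (PowerSeries.mk fun n => if n < m then rootFun k f s0 v n else 0) := by
    ext j
    rw [PowerSeries.coeff_mk, PowerSeries.coeff_mk]
    split
    · next h => rw [rootAux_eq k f s0 v m j h]
    · rfl
  rw [hmk]

end Root

theorem exists_pow_eq (k : ℕ) (f : PowerSeries A) (s0 : A)
    (h0 : s0 ^ k = PowerSeries.constantCoeff f)
    (hu : IsUnit ((k : A) * s0 ^ (k - 1))) :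
    ∃ s : PowerSeries A, s ^ k = f ∧ PowerSeries.constantCoeff s = s0 := by
  set v : A := ((hu.unit⁻¹ : Aˣ) : A) with hv
  set s : PowerSeries A := PowerSeries.mk (rootFun k f s0 v) with hsdef
  have hs0 : PowerSeries.constantCoeff s = s0 := by
    rw [hsdef, ← PowerSeries.coeff_zero_eq_constantCoeff, PowerSeries.coeff_mk, rootFun_zero]
  refine ⟨s, ?_, hs0⟩
  ext m
  rcases Nat.eq_zero_or_pos m with rfl | hm
  · rw [PowerSeries.coeff_zero_eq_constantCoeff, map_pow, hs0, h0]
  · set p : PowerSeries A := PowerSeries.mk fun n => if n < m then rootFun k f s0 v n else 0 with hpdef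
    have hagree : ∀ n < m, PowerSeries.coeff n p = PowerSeries.coeff n s := by
      intro n hn
      rw [hpdef, hsdef, PowerSeries.coeff_mk, PowerSeries.coeff_mk, if_pos hn]
    have hpm : PowerSeries.coeff m p = 0 := by
      rw [hpdef, PowerSeries.coeff_mk, if_neg (lt_irrefl m)]
    have hcp : PowerSeries.constantCoeff p = s0 := by
      rw [← PowerSeries.coeff_zero_eq_constantCoeff, hpdef, PowerSeries.coeff_mk, if_pos hm,
        rootFun_zero]
    rw [coeff_pow_key m hm k s p hagree hpm, hcp]
    have hsm : PowerSeries.coeff m s =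
        v * (PowerSeries.coeff m f - PowerSeries.coeff m (p ^ k)) := by
      rw [hsdef, PowerSeries.coeff_mk, rootFun_spec k f s0 v m (by omega), hpdef]
    have hone : (k : A) * s0 ^ (k - 1) * v = 1 := hu.mul_val_inv
    rw [hsm, ← mul_assoc, hone]
    ring


noncomputable def subRingHom (S : PowerSeries A) : PowerSeries A →+* PowerSeries A where
  toFun := subFun S
  map_one' := subFun_one S
  map_mul' := subFun_mul S
  map_zero' := subFun_zero S
  map_add' := subFun_add S

theorem subFun_injective (S : PowerSeries A) (u : Aˣ)
    (hu : (u : A) = PowerSeries.constantCoeff S) : Function.Injective (subFun S) := by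
  have hzero : ∀ f : PowerSeries A, subFun S f = 0 → f = 0 := by
    intro f hf
    ext m
    simp only [map_zero]
    induction m using Nat.strong_induction_on with
    | _ m ih =>
      have h1 : PowerSeries.coeff m (subFun S f) = 0 := by rw [hf]; simp
      rw [coeff_subFun_triangle] at h1
      have h2 : ∑ n ∈ Finset.range m, PowerSeries.coeff n f *
          PowerSeries.coeff m ((PowerSeries.X * S) ^ n) = 0 := by
        apply Finset.sum_eq_zero
        intro n hn
        rw [ih n (Finset.mem_range.mp hn), zero_mul]
      rw [h2, add_zero] at h1
      have h3 : PowerSeries.coeff m f * ((u ^ m : Aˣ) : A) = 0 := by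
        rw [Units.val_pow_eq_pow_val, hu]; exact h1
      exact (Units.mul_left_eq_zero (u ^ m)).mp h3
  intro f g hfg
  have : subFun S (f - g) = 0 := by
    have hsub : subFun S (f - g) = subFun S f - subFun S g := by
      have := subFun_add S (f - g) g
      rw [sub_add_cancel] at this
      rw [this]; ring
    rw [hsub, hfg, sub_self]
  have := hzero _ this
  exact sub_eq_zero.mp this

theorem subFun_surjective (S : PowerSeries A) (u : Aˣ)
    (hu : (u : A) = PowerSeries.constantCoeff S) : Function.Surjective (subFun S) :=
  fun h => ⟨PowerSeries.mk (solve S u h), subFun_solve S u h hu⟩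

/-- The substitution `X ↦ X * S` as a ring automorphism of `A⟦X⟧`. -/
noncomputable def subEquiv (S : PowerSeries A) (u : Aˣ)
    (hu : (u : A) = PowerSeries.constantCoeff S) : PowerSeries A ≃+* PowerSeries A :=
  RingEquiv.ofBijective (subRingHom S) ⟨subFun_injective S u hu, subFun_surjective S u hu⟩

theorem subEquiv_apply (S : PowerSeries A) (u : Aˣ)
    (hu : (u : A) = PowerSeries.constantCoeff S) (f : PowerSeries A) :
    subEquiv S u hu f = subFun S f := rfl

/-- Coefficientwise application of a ring automorphism of `R`, as an automorphism of `R⟦X⟧`. -/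
noncomputable def mapEquiv (τ : A ≃+* A) : PowerSeries A ≃+* PowerSeries A where
  toFun := PowerSeries.map (τ : A →+* A)
  invFun := PowerSeries.map (τ.symm : A →+* A)
  left_inv f := by ext m; simp [PowerSeries.coeff_map]
  right_inv f := by ext m; simp [PowerSeries.coeff_map]
  map_mul' := map_mul _
  map_add' := map_add _

theorem mapEquiv_apply (τ : A ≃+* A) (f : PowerSeries A) :
    mapEquiv τ f = PowerSeries.map (τ : A →+* A) f := rfl

end Sub



variable {R : Type*} [CommRing R]

/-- The exponent `(i, m)` as a `Fin 2 →₀ ℕ` (z-exponent `i`, u-exponent `m`). -/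
noncomputable def D (i m : ℕ) : Fin 2 →₀ ℕ := Finsupp.single 0 i + Finsupp.single 1 m

@[simp] theorem D_apply0 (i m : ℕ) : D i m 0 = i := by
  simp [D, Finsupp.single_apply]

@[simp] theorem D_apply1 (i m : ℕ) : D i m 1 = m := by
  simp [D, Finsupp.single_apply]

theorem eq_D (d : Fin 2 →₀ ℕ) : d = D (d 0) (d 1) := by
  ext x
  fin_cases x <;> simp [D, Finsupp.single_apply]

theorem D_add (i m j n : ℕ) : D i m + D j n = D (i + j) (m + n) := by
  ext x
  fin_cases x <;> simp [D, Finsupp.single_apply]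

theorem D_eq_iff {i m j n : ℕ} : D i m = D j n ↔ i = j ∧ m = n := by
  constructor
  · intro h
    exact ⟨by rw [← D_apply0 i m, h, D_apply0], by rw [← D_apply1 i m, h, D_apply1]⟩
  · rintro ⟨rfl, rfl⟩; rfl

theorem single_zero_eq_D (i : ℕ) : Finsupp.single (0 : Fin 2) i = D i 0 := by
  simp [D]

theorem single_one_eq_D (m : ℕ) : Finsupp.single (1 : Fin 2) m = D 0 m := by
  simp [D]

/-- Forward map of the isomorphism `R⟦z,u⟧ ≃ R⟦z⟧⟦u⟧`. -/
noncomputable def toPS (f : MvPowerSeries (Fin 2) R) : PowerSeries (PowerSeries R) :=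
  PowerSeries.mk fun m => PowerSeries.mk fun i => MvPowerSeries.coeff (D i m) f

/-- Backward map. -/
noncomputable def ofPS (h : PowerSeries (PowerSeries R)) : MvPowerSeries (Fin 2) R :=
  fun d => PowerSeries.coeff (d 0) (PowerSeries.coeff (d 1) h)

theorem coeff_toPS (f : MvPowerSeries (Fin 2) R) (m i : ℕ) :
    PowerSeries.coeff i (PowerSeries.coeff m (toPS f)) =
      MvPowerSeries.coeff (D i m) f := by
  rw [toPS, PowerSeries.coeff_mk, PowerSeries.coeff_mk]

theorem coeff_ofPS (h : PowerSeries (PowerSeries R)) (d : Fin 2 →₀ ℕ) :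
    MvPowerSeries.coeff d (ofPS h) =
      PowerSeries.coeff (d 0) (PowerSeries.coeff (d 1) h) := rfl

theorem toPS_mul (f g : MvPowerSeries (Fin 2) R) : toPS (f * g) = toPS f * toPS g := by
  ext m i
  rw [coeff_toPS, MvPowerSeries.coeff_mul, PowerSeries.coeff_mul, map_sum]
  have : ∀ q ∈ Finset.HasAntidiagonal.antidiagonal m,
      PowerSeries.coeff i (PowerSeries.coeff q.1 (toPS f) *
        PowerSeries.coeff q.2 (toPS g)) =
      ∑ c ∈ Finset.HasAntidiagonal.antidiagonal i,
        MvPowerSeries.coeff (D c.1 q.1) f * MvPowerSeries.coeff (D c.2 q.2) g := by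
    intro q _
    rw [PowerSeries.coeff_mul]
    exact Finset.sum_congr rfl fun c _ => by rw [coeff_toPS, coeff_toPS]
  rw [Finset.sum_congr rfl this, ← Finset.sum_product']
  refine Finset.sum_nbij' (fun p => ((p.1 1, p.2 1), (p.1 0, p.2 0)))
    (fun c => (D c.2.1 c.1.1, D c.2.2 c.1.2)) ?_ ?_ ?_ ?_ ?_
  · intro p hp
    rw [Finset.HasAntidiagonal.mem_antidiagonal] at hp
    simp only [Finset.mem_product, Finset.HasAntidiagonal.mem_antidiagonal]
    constructor
    · rw [show p.1 1 + p.2 1 = (p.1 + p.2) 1 from rfl, hp, D_apply1]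
    · rw [show p.1 0 + p.2 0 = (p.1 + p.2) 0 from rfl, hp, D_apply0]
  · intro c hc
    simp only [Finset.mem_product, Finset.HasAntidiagonal.mem_antidiagonal] at hc
    rw [Finset.HasAntidiagonal.mem_antidiagonal, D_add, hc.1, hc.2]
  · intro p hp
    simp only
    rw [← eq_D, ← eq_D]
  · intro c hc
    simp only [D_apply0, D_apply1]
  · intro p hp
    simp only
    rw [← eq_D, ← eq_D]

theorem toPS_add (f g : MvPowerSeries (Fin 2) R) : toPS (f + g) = toPS f + toPS g := by
  ext m i
  rw [map_add, map_add, coeff_toPS, coeff_toPS, coeff_toPS, map_add]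

/-- The ring isomorphism `R⟦z,u⟧ ≃+* R⟦z⟧⟦u⟧`. -/
noncomputable def psEquiv : MvPowerSeries (Fin 2) R ≃+* PowerSeries (PowerSeries R) where
  toFun := toPS
  invFun := ofPS
  left_inv f := by
    ext d
    rw [show (MvPowerSeries.coeff d) (ofPS (toPS f)) = _ from coeff_ofPS _ _, coeff_toPS,
      ← eq_D]
  right_inv h := by
    ext m i
    rw [coeff_toPS, coeff_ofPS, D_apply0, D_apply1]
  map_mul' := toPS_mul
  map_add' := toPS_add



theorem toPS_X0 : toPS (MvPowerSeries.X (0 : Fin 2) : MvPowerSeries (Fin 2) R) =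
    PowerSeries.C PowerSeries.X := by
  ext m i
  rw [coeff_toPS, MvPowerSeries.coeff_X, single_zero_eq_D, PowerSeries.coeff_C]
  by_cases hm : m = 0
  · subst hm
    rw [if_pos rfl, PowerSeries.coeff_X]
    by_cases hi : i = 1
    · subst hi; rw [if_pos rfl, if_pos rfl]
    · rw [if_neg hi, if_neg (by rw [D_eq_iff]; tauto)]
  · rw [if_neg hm, if_neg (by rw [D_eq_iff]; tauto), map_zero]

theorem toPS_X1 : toPS (MvPowerSeries.X (1 : Fin 2) : MvPowerSeries (Fin 2) R) =
    (PowerSeries.X : PowerSeries (PowerSeries R)) := by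
  ext m i
  rw [coeff_toPS, MvPowerSeries.coeff_X, single_one_eq_D, PowerSeries.coeff_X]
  by_cases hm : m = 1
  · subst hm
    rw [if_pos rfl, PowerSeries.coeff_one]
    by_cases hi : i = 0
    · subst hi; rw [if_pos rfl, if_pos rfl]
    · rw [if_neg hi, if_neg (by rw [D_eq_iff]; tauto)]
  · rw [if_neg hm, if_neg (by rw [D_eq_iff]; tauto), map_zero]

theorem zero_eq_D : (0 : Fin 2 →₀ ℕ) = D 0 0 := by simp [D]

theorem toPS_C (c : R) : toPS (MvPowerSeries.C c) =
    PowerSeries.C (PowerSeries.C c) := by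
  ext m i
  rw [coeff_toPS, MvPowerSeries.coeff_C, zero_eq_D, PowerSeries.coeff_C]
  by_cases hm : m = 0
  · subst hm
    rw [if_pos rfl, PowerSeries.coeff_C]
    by_cases hi : i = 0
    · subst hi; rw [if_pos rfl, if_pos rfl]
    · rw [if_neg hi, if_neg (by rw [D_eq_iff]; tauto)]
  · rw [if_neg hm, if_neg (by rw [D_eq_iff]; tauto), map_zero]

end StmtAux
open MvPowerSeries

/-- The formal partial derivative of a formal power series in `ℂ⟦z,u⟧` with respect to the
variable `k`. -/
noncomputable def mvPowerSeriesPderiv (k : Fin 2) (g : MvPowerSeries (Fin 2) ℂ) :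
    MvPowerSeries (Fin 2) ℂ :=
  fun d => ((d k + 1 : ℕ) : ℂ) * coeff (d + Finsupp.single k 1) g

/-- Let `g = Σ a_{i,j} z^i u^j ∈ ℂ⟦z,u⟧` be such that (1) `a_{i,j} ≠ 0` implies
`2i + j ≡ 2 (mod 4)` and `i + j ≥ 2`; (2) `a_{0,2} ≠ 0`; (3) `ℂ⟦z,u⟧/(g, ∂g/∂z, ∂g/∂u)`
is finite-dimensional over ℂ. Then there is a positive integer `i₀` and a ℂ-algebra
automorphism `φ` of `ℂ⟦z,u⟧` with `φ(g) = z^(2i₀+1) + u²`. Here `z = X 0`, `u = X 1`. -/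
theorem stmt_12 (g : MvPowerSeries (Fin 2) ℂ)
    (h1 : ∀ d : Fin 2 →₀ ℕ, coeff d g ≠ 0 →
      (2 * d 0 + d 1) % 4 = 2 ∧ 2 ≤ d 0 + d 1)
    (h2 : coeff (Finsupp.single 1 2) g ≠ 0)
    (h3 : FiniteDimensional ℂ
      (MvPowerSeries (Fin 2) ℂ ⧸
        Ideal.span {g, mvPowerSeriesPderiv 0 g, mvPowerSeriesPderiv 1 g})) :
    ∃ i₀ : ℕ, 0 < i₀ ∧
      ∃ φ : MvPowerSeries (Fin 2) ℂ ≃ₐ[ℂ] MvPowerSeries (Fin 2) ℂ,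
        φ g = (X 0) ^ (2 * i₀ + 1) + (X 1) ^ 2 := by
  classical
  -- Notation
  set G : PowerSeries (PowerSeries ℂ) := StmtAux.toPS g with hGdef
  -- Parity: odd u-exponents vanish
  have hodd : ∀ d : Fin 2 →₀ ℕ, d 1 % 2 = 1 → coeff d g = 0 := by
    intro d hd
    by_contra h
    obtain ⟨hp, _⟩ := h1 d h
    omega
  have hG_odd : ∀ m, m % 2 = 1 → PowerSeries.coeff m G = 0 := by
    intro m hm
    ext i
    rw [hGdef, StmtAux.coeff_toPS, map_zero]
    exact hodd _ (by rwa [StmtAux.D_apply1])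
  -- The u-constant coefficient `a(z)`
  set a : PowerSeries ℂ := PowerSeries.coeff 0 G with hadef
  have ha_coeff : ∀ i, PowerSeries.coeff i a = coeff (StmtAux.D i 0) g := by
    intro i
    rw [hadef, hGdef, StmtAux.coeff_toPS]
  have ha_odd : ∀ i, PowerSeries.coeff i a ≠ 0 → i % 2 = 1 ∧ 3 ≤ i := by
    intro i h
    rw [ha_coeff] at h
    obtain ⟨hp, hs⟩ := h1 _ h
    rw [StmtAux.D_apply0, StmtAux.D_apply1] at hp hs
    omega
  -- Decompose G = C a + X^2 * Eb
  set Eb : PowerSeries (PowerSeries ℂ) :=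
    PowerSeries.mk (fun m => PowerSeries.coeff (m + 2) G) with hEbdef
  have hEeq : G = PowerSeries.C a + PowerSeries.X ^ 2 * Eb := by
    ext m
    rw [map_add, PowerSeries.coeff_C, PowerSeries.coeff_X_pow_mul']
    rcases m with _ | _ | m
    · rw [if_pos rfl, if_neg (by omega), add_zero, hadef]
    · rw [if_neg (by omega), if_neg (by omega), add_zero]
      rw [show (PowerSeries.coeff (0 + 1)) G = 0 from hG_odd 1 (by omega),
        map_zero]
    · have hidx : m + 1 + 1 - 2 = m := by omega
      rw [if_neg (by omega), if_pos (by omega), zero_add, hEbdef, PowerSeries.coeff_mk, hidx]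
  have hEb0 : PowerSeries.constantCoeff Eb =
      PowerSeries.coeff 2 G := by
    rw [hEbdef, ← PowerSeries.coeff_zero_eq_constantCoeff, PowerSeries.coeff_mk]
  have hc : PowerSeries.constantCoeff (PowerSeries.coeff 2 G) ≠ 0 := by
    rw [← PowerSeries.coeff_zero_eq_constantCoeff, hGdef, StmtAux.coeff_toPS,
      ← StmtAux.single_one_eq_D]
    exact h2
  -- Square root of Eb
  obtain ⟨w, hw⟩ := IsAlgClosed.exists_pow_nat_eq
    (PowerSeries.constantCoeff (PowerSeries.coeff 2 G)) (n := 2) (by omega)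
  have hw0 : w ≠ 0 := by
    intro h
    rw [h] at hw
    simp at hw
    exact hc hw.symm
  obtain ⟨s0, hs0sq, hs0c⟩ := StmtAux.exists_pow_eq 2 (PowerSeries.coeff 2 G) w
    hw (by
      rw [pow_one]
      exact isUnit_iff_ne_zero.mpr (mul_ne_zero two_ne_zero hw0))
  have hs0ne : PowerSeries.constantCoeff s0 ≠ 0 := by rw [hs0c]; exact hw0
  obtain ⟨S, hSsq, hSc⟩ := StmtAux.exists_pow_eq 2 Eb s0
    (by rw [hEb0]; exact hs0sq)
    (by
      rw [pow_one]
      apply PowerSeries.isUnit_iff_constantCoeff.mpr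
      rw [map_mul]
      apply IsUnit.mul
      · exact isUnit_iff_ne_zero.mpr (by
          rw [show ((2 : ℕ) : PowerSeries ℂ) = ((2 : ℕ) : PowerSeries ℂ) from rfl, map_natCast]
          norm_num)
      · exact isUnit_iff_ne_zero.mpr (by rw [hs0c]; exact hw0))
  have hs0unit : IsUnit s0 := PowerSeries.isUnit_iff_constantCoeff.mpr
    (isUnit_iff_ne_zero.mpr hs0ne)
  set u1 : (PowerSeries ℂ)ˣ := hs0unit.unit with hu1def
  have hu1 : (u1 : PowerSeries ℂ) = PowerSeries.constantCoeff S := by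
    rw [hSc, hu1def]; exact hs0unit.unit_spec
  set ψ1 := StmtAux.subEquiv S u1 hu1 with hψ1def
  have hψ1 : ψ1 (PowerSeries.C a + PowerSeries.X ^ 2) = G := by
    rw [hψ1def, StmtAux.subEquiv_apply, StmtAux.subFun_add, StmtAux.subFun_C, pow_two,
      StmtAux.subFun_mul, StmtAux.subFun_X, hEeq]
    rw [show PowerSeries.X * S * (PowerSeries.X * S) = PowerSeries.X ^ 2 * (S * S) by ring,
      ← pow_two, hSsq]
  -- a ≠ 0 from finite-dimensionality
  have ha : a ≠ 0 := by
    intro ha0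
    have h_z : ∀ d : Fin 2 →₀ ℕ, d 1 = 0 → coeff d g = 0 := by
      intro d hd
      have hdd := StmtAux.eq_D d
      rw [hd] at hdd
      rw [hdd, ← ha_coeff, ha0, map_zero]
    -- every generator of the Jacobian ideal is divisible by X 1
    have hX1dvd : ∀ f : MvPowerSeries (Fin 2) ℂ, (∀ d : Fin 2 →₀ ℕ, d 1 = 0 → coeff d f = 0) →
        (X 1 : MvPowerSeries (Fin 2) ℂ) ∣ f := by
      intro f hf
      have hX : (PowerSeries.X : PowerSeries (PowerSeries ℂ)) ∣ StmtAux.toPS f := by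
        rw [PowerSeries.X_dvd_iff]
        ext i
        rw [← PowerSeries.coeff_zero_eq_constantCoeff, StmtAux.coeff_toPS, map_zero]
        exact hf _ (StmtAux.D_apply1 i 0)
      obtain ⟨q, hq⟩ := hX
      refine ⟨(StmtAux.psEquiv (R := ℂ)).symm q, ?_⟩
      apply (StmtAux.psEquiv (R := ℂ)).injective
      rw [map_mul, RingEquiv.apply_symm_apply]
      rw [show (StmtAux.psEquiv (R := ℂ)) f = StmtAux.toPS f from rfl,
        show (StmtAux.psEquiv (R := ℂ)) (X 1) = StmtAux.toPS (X 1) from rfl,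
        StmtAux.toPS_X1]
      exact hq
    have hg1 : (X 1 : MvPowerSeries (Fin 2) ℂ) ∣ g := hX1dvd g h_z
    have hg2 : (X 1 : MvPowerSeries (Fin 2) ℂ) ∣ mvPowerSeriesPderiv 0 g := by
      apply hX1dvd
      intro d hd
      show ((d 0 + 1 : ℕ) : ℂ) * coeff (d + Finsupp.single 0 1) g = 0
      rw [h_z _ (by simp [Finsupp.single_apply, hd]), mul_zero]
    have hg3 : (X 1 : MvPowerSeries (Fin 2) ℂ) ∣ mvPowerSeriesPderiv 1 g := by
      apply hX1dvd
      intro d hd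
      show ((d 1 + 1 : ℕ) : ℂ) * coeff (d + Finsupp.single 1 1) g = 0
      rw [hodd _ (by simp [Finsupp.single_apply, hd]), mul_zero]
    -- hence the ideal is contained in (X 1)
    set I : Ideal (MvPowerSeries (Fin 2) ℂ) :=
      Ideal.span {g, mvPowerSeriesPderiv 0 g, mvPowerSeriesPderiv 1 g} with hIdef
    have hle : I ≤ Ideal.span {(X 1 : MvPowerSeries (Fin 2) ℂ)} := by
      rw [hIdef, Ideal.span_le]
      rintro x hx
      simp only [Set.mem_insert_iff, Set.mem_singleton_iff] at hx
      rcases hx with rfl | rfl | rfl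
      · exact Ideal.mem_span_singleton.mpr hg1
      · exact Ideal.mem_span_singleton.mpr hg2
      · exact Ideal.mem_span_singleton.mpr hg3
    -- the images of (X 0)^n in the quotient are linearly independent
    have hnotli := Module.Finite.not_linearIndependent_of_infinite
      (R := ℂ) (fun n : ℕ => Ideal.Quotient.mkₐ ℂ I ((X 0 : MvPowerSeries (Fin 2) ℂ) ^ n))
    apply hnotli
    rw [linearIndependent_iff']
    intro s c hsum n hn
    have hsum2 : Ideal.Quotient.mkₐ ℂ I (∑ k ∈ s, c k • (X 0 : MvPowerSeries (Fin 2) ℂ) ^ k)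
        = 0 := by
      rw [map_sum]
      rw [← hsum]
      exact Finset.sum_congr rfl fun k _ => by rw [map_smul]
    have hmem : (∑ k ∈ s, c k • (X 0 : MvPowerSeries (Fin 2) ℂ) ^ k) ∈ I := by
      rwa [Ideal.Quotient.mkₐ_eq_mk, Ideal.Quotient.eq_zero_iff_mem] at hsum2
    obtain ⟨q, hq⟩ := Ideal.mem_span_singleton.mp (hle hmem)
    -- compute the coefficient at `single 0 n`
    have e1 : coeff (Finsupp.single (0 : Fin 2) n)
        (∑ k ∈ s, c k • (X 0 : MvPowerSeries (Fin 2) ℂ) ^ k) = c n := by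
      rw [map_sum, Finset.sum_eq_single n]
      · rw [map_smul, X_pow_eq, coeff_monomial, if_pos rfl, smul_eq_mul, mul_one]
      · intro k _ hk
        rw [map_smul, X_pow_eq, coeff_monomial, if_neg (by
          intro hcon
          rw [StmtAux.single_zero_eq_D, StmtAux.single_zero_eq_D, StmtAux.D_eq_iff] at hcon
          exact hk hcon.1.symm), smul_eq_mul, mul_zero]
      · intro h; exact absurd hn h
    have e2 : coeff (Finsupp.single (0 : Fin 2) n)
        (∑ k ∈ s, c k • (X 0 : MvPowerSeries (Fin 2) ℂ) ^ k) = 0 := by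
      rw [hq, coeff_mul]
      apply Finset.sum_eq_zero
      rintro ⟨r, t⟩ hrt
      rw [Finset.HasAntidiagonal.mem_antidiagonal] at hrt
      dsimp only
      have hr1 : r 1 = 0 := by
        have h7 : r 1 + t 1 = (Finsupp.single (0 : Fin 2) n) 1 := by
          rw [← Finsupp.add_apply, hrt]
        rw [Finsupp.single_apply, if_neg (by decide)] at h7
        omega
      rw [coeff_X, if_neg (by
        intro h
        rw [h] at hr1
        simp [Finsupp.single_apply] at hr1), zero_mul]
    rw [e1] at e2
    exact e2
  -- order of a
  have hex : ∃ i, PowerSeries.coeff i a ≠ 0 := by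
    by_contra hno
    push_neg at hno
    exact ha (by ext i; rw [hno i, map_zero])
  set m₀ := Nat.find hex with hm₀def
  have hm₀ : PowerSeries.coeff m₀ a ≠ 0 := Nat.find_spec hex
  have hmin : ∀ i < m₀, PowerSeries.coeff i a = 0 := by
    intro i hi
    have := Nat.find_min hex hi
    push_neg at this
    exact this
  obtain ⟨hm₀odd, hm₀3⟩ := ha_odd m₀ hm₀
  set B : PowerSeries ℂ := PowerSeries.mk (fun i => PowerSeries.coeff (m₀ + i) a) with hBdef
  have haB : a = PowerSeries.X ^ m₀ * B := by
    ext i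
    rw [PowerSeries.coeff_X_pow_mul']
    by_cases hi : m₀ ≤ i
    · have hidx : m₀ + (i - m₀) = i := by omega
      rw [if_pos hi, hBdef, PowerSeries.coeff_mk, hidx]
    · rw [if_neg hi, hmin i (by omega)]
  have hB0 : PowerSeries.constantCoeff B = PowerSeries.coeff m₀ a := by
    rw [hBdef, ← PowerSeries.coeff_zero_eq_constantCoeff, PowerSeries.coeff_mk, add_zero]
  obtain ⟨t0, ht0⟩ := IsAlgClosed.exists_pow_nat_eq (PowerSeries.constantCoeff B) (n := m₀)
    (by omega)
  have ht0ne : t0 ≠ 0 := by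
    intro h
    rw [h, zero_pow (by omega), hB0] at ht0
    exact hm₀ ht0.symm
  obtain ⟨T, hTpow, hTc⟩ := StmtAux.exists_pow_eq m₀ B t0 ht0
    (isUnit_iff_ne_zero.mpr (mul_ne_zero (Nat.cast_ne_zero.mpr (by omega))
      (pow_ne_zero _ ht0ne)))
  have ht0unit : IsUnit t0 := isUnit_iff_ne_zero.mpr ht0ne
  set u2 : ℂˣ := ht0unit.unit with hu2def
  have hu2 : (u2 : ℂ) = PowerSeries.constantCoeff T := by
    rw [hTc, hu2def]; exact ht0unit.unit_spec
  set τ := StmtAux.subEquiv T u2 hu2 with hτdef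
  have hτ : τ (PowerSeries.X ^ m₀) = a := by
    rw [map_pow, hτdef, StmtAux.subEquiv_apply, StmtAux.subFun_X, mul_pow, hTpow, ← haB]
  set ψ2 := StmtAux.mapEquiv τ with hψ2def
  have hψ2 : ψ2 (PowerSeries.C (PowerSeries.X ^ m₀) + PowerSeries.X ^ 2) =
      PowerSeries.C a + PowerSeries.X ^ 2 := by
    rw [hψ2def, StmtAux.mapEquiv_apply, map_add, PowerSeries.map_C]
    congr 1
    · exact congrArg _ hτ
    · rw [map_pow, PowerSeries.map_X]
  -- combine
  set χ := ψ2.trans ψ1 with hχdef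
  have hχ : χ (PowerSeries.C (PowerSeries.X ^ m₀) + PowerSeries.X ^ 2) = G := by
    rw [hχdef, RingEquiv.trans_apply, hψ2, hψ1]
  set ρ := ((StmtAux.psEquiv (R := ℂ)).trans χ.symm).trans (StmtAux.psEquiv (R := ℂ)).symm
    with hρdef
  have hρg : ρ g = (X 0 : MvPowerSeries (Fin 2) ℂ) ^ m₀ + (X 1) ^ 2 := by
    rw [hρdef, RingEquiv.trans_apply, RingEquiv.trans_apply]
    rw [show (StmtAux.psEquiv (R := ℂ)) g = G from rfl]
    have h5 : χ.symm G = PowerSeries.C (PowerSeries.X ^ m₀) +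
        PowerSeries.X ^ 2 := by
      rw [← hχ, RingEquiv.symm_apply_apply]
    rw [h5]
    have h6 : (StmtAux.psEquiv (R := ℂ)) ((X 0 : MvPowerSeries (Fin 2) ℂ) ^ m₀ + (X 1) ^ 2) =
        PowerSeries.C (PowerSeries.X ^ m₀) + PowerSeries.X ^ 2 := by
      rw [map_add, map_pow, map_pow,
        show (StmtAux.psEquiv (R := ℂ)) (X 0) = StmtAux.toPS (X 0) from rfl,
        show (StmtAux.psEquiv (R := ℂ)) (X 1) = StmtAux.toPS (X 1) from rfl,
        StmtAux.toPS_X0, StmtAux.toPS_X1, map_pow]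
    rw [← h6, RingEquiv.symm_apply_apply]
  have hcommutes : ∀ c : ℂ, ρ (algebraMap ℂ (MvPowerSeries (Fin 2) ℂ) c) =
      algebraMap ℂ (MvPowerSeries (Fin 2) ℂ) c := by
    intro c
    rw [← MvPowerSeries.c_eq_algebraMap, hρdef, RingEquiv.trans_apply, RingEquiv.trans_apply]
    have hA : (StmtAux.psEquiv (R := ℂ)) (MvPowerSeries.C c) =
        PowerSeries.C (PowerSeries.C c) := StmtAux.toPS_C c
    rw [hA]
    have hτC : τ (PowerSeries.C c) = PowerSeries.C c :=
      (StmtAux.subEquiv_apply T u2 hu2 _).trans (StmtAux.subFun_C T c)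
    have hB2 : χ (PowerSeries.C (PowerSeries.C c)) =
        PowerSeries.C (PowerSeries.C c) := by
      rw [hχdef, RingEquiv.trans_apply, hψ2def, StmtAux.mapEquiv_apply, PowerSeries.map_C]
      rw [show ((τ : PowerSeries ℂ →+* PowerSeries ℂ) (PowerSeries.C c)) =
        PowerSeries.C c from hτC]
      rw [hψ1def, StmtAux.subEquiv_apply, StmtAux.subFun_C]
    have hB3 : χ.symm (PowerSeries.C (PowerSeries.C c)) =
        PowerSeries.C (PowerSeries.C c) := by
      conv_lhs => rw [← hB2]
      rw [RingEquiv.symm_apply_apply]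
    rw [hB3, ← hA, RingEquiv.symm_apply_apply]
  refine ⟨m₀ / 2, by omega, AlgEquiv.ofRingEquiv hcommutes, ?_⟩
  have : AlgEquiv.ofRingEquiv hcommutes g = ρ g := rfl
  rw [this, hρg, show 2 * (m₀ / 2) + 1 = m₀ by omega]
end
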